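/- arXiv:2212.14577 — 8 statements merged into one kernel-verified Lean document; each statement's English description precedes it below -/
import Mathlib

section
/- Let (x̄,ȳ) be a T-stationary point of the regularized continuous reformulation R. Then the summation inequality constraint is active at (x̄,ȳ), i.e. ∑_{i=1}^n ȳ_i = n−s. -/
open scoped Classical
open Finset Filter Topology

noncomputable section
namespace Scholtes

/-- Vectors in ℝⁿ. -/
abbrev Vec (n : ℕ) := Fin n → ℝ

variable {n : ℕ} {P Q : Type*} [Fintype P] [Fintype Q]

/-- Euclidean dot product. -/
def dot (u v : Vec n) : ℝ := ∑ i, u i * v i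

/-- Gradient: vector of partial derivatives. -/
def grad (f : Vec n → ℝ) (x : Vec n) : Vec n := fun i => fderiv ℝ f x (Pi.single i 1)

/-- Hessian bilinear form of `L` at `z`, evaluated at directions `ξ`, `ζ`. -/
def hess (L : Vec n × Vec n → ℝ) (z ξ ζ : Vec n × Vec n) : ℝ :=
  fderiv ℝ (fun w => fderiv ℝ L w ξ) z ζ

/-- The pair vector (e_i, 0) ∈ ℝ²ⁿ. -/
def ex (i : Fin n) : Vec n × Vec n := (Pi.single i 1, 0)

/-- The pair vector (0, e_i) ∈ ℝ²ⁿ. -/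
def ey (i : Fin n) : Vec n × Vec n := (0, Pi.single i 1)

/-- The pair vector (0, e) ∈ ℝ²ⁿ, where e is the all-ones vector. -/
def eAll : Vec n × Vec n := (0, fun _ => 1)

/-- The pair vector (y_i e_i, x_i e_i) ∈ ℝ²ⁿ. -/
def hvec (x y : Vec n) (i : Fin n) : Vec n × Vec n := (Pi.single i (y i), Pi.single i (x i))

/-- The number of negative eigenvalues of the bilinear form `B` restricted to the
(sub)space `T`, expressed as the maximal dimension of a linear subspace of `T` on
which the associated quadratic form is negative definite. -/
def negIndex (B : (Vec n × Vec n) → (Vec n × Vec n) → ℝ) (T : (Vec n × Vec n) → Prop) : ℕ :=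
  sSup {d : ℕ | ∃ W : Submodule ℝ (Vec n × Vec n),
    (∀ ξ ∈ W, T ξ) ∧ Module.finrank ℝ W = d ∧ ∀ ξ ∈ W, ξ ≠ 0 → B ξ ξ < 0}

/-- The data and standing assumptions of the paper: objective `f`, equality
constraints `h`, inequality constraints `g`, positive pairwise different linear
coefficients `c`, cardinality bound `s` and regularization parameter `ε`. -/
structure Setting (n : ℕ) (P Q : Type*) [Fintype P] [Fintype Q] where
  f : Vec n → ℝ
  h : P → Vec n → ℝ
  g : Q → Vec n → ℝ
  c : Vec n
  s : ℕ
  ε : ℝ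
  hn : 1 ≤ n
  hf : ContDiff ℝ 2 f
  hh : ∀ p, ContDiff ℝ 2 (h p)
  hg : ∀ q, ContDiff ℝ 2 (g q)
  hcpos : ∀ i, 0 < c i
  hcinj : Function.Injective c
  hs : s < n
  hεpos : 0 < ε
  hεle : ε ≤ 1 / ((n : ℝ) - s)

/-- Index set a01: x̄_i = 0, ȳ_i > 0. -/
def a01 (x y : Vec n) : Finset (Fin n) := univ.filter fun i => x i = 0 ∧ 0 < y i

/-- Index set a10: x̄_i ≠ 0, ȳ_i = 0. -/
def a10 (x y : Vec n) : Finset (Fin n) := univ.filter fun i => x i ≠ 0 ∧ y i = 0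

/-- Index set a00: x̄_i = 0, ȳ_i = 0. -/
def a00 (x y : Vec n) : Finset (Fin n) := univ.filter fun i => x i = 0 ∧ y i = 0

/-- Index set N(y): y_i = 0. -/
def Nact (y : Vec n) : Finset (Fin n) := univ.filter fun i => y i = 0

/-- Index set H≥(x,y): x_i y_i = −t. -/
def Hge (t : ℝ) (x y : Vec n) : Finset (Fin n) := univ.filter fun i => x i * y i = -t

/-- Index set H≤(x,y): x_i y_i = t. -/
def Hle (t : ℝ) (x y : Vec n) : Finset (Fin n) := univ.filter fun i => x i * y i = t

/-- Index set H(x,y) = H≥ ∪ H≤. -/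
def Hact (t : ℝ) (x y : Vec n) : Finset (Fin n) := Hge t x y ∪ Hle t x y

/-- Active inequality constraints Q0(x). -/
def Q0 (D : Setting n P Q) (x : Vec n) : Finset Q := univ.filter fun q => D.g q x = 0

/-- Active upper bounds E(y): y_i = 1 + ε. -/
def Eact (D : Setting n P Q) (y : Vec n) : Finset (Fin n) := univ.filter fun i => y i = 1 + D.ε

/-- Index set O(x,y) = complement of E(y) ∪ N(y) ∪ H(x,y). -/
def Oact (D : Setting n P Q) (t : ℝ) (x y : Vec n) : Finset (Fin n) :=
  (Eact D y ∪ Nact y ∪ Hact t x y)ᶜ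

/-- Feasibility for the regularized continuous reformulation R. -/
def feasR (D : Setting n P Q) (x y : Vec n) : Prop :=
  (∀ p, D.h p x = 0) ∧ (∀ q, 0 ≤ D.g q x) ∧ ((n : ℝ) - D.s ≤ ∑ i, y i) ∧
  (∀ i, x i * y i = 0) ∧ (∀ i, 0 ≤ y i ∧ y i ≤ 1 + D.ε)

/-- Feasibility for the Scholtes-type regularization S(t). -/
def feasS (D : Setting n P Q) (t : ℝ) (x y : Vec n) : Prop :=
  (∀ p, D.h p x = 0) ∧ (∀ q, 0 ≤ D.g q x) ∧ ((n : ℝ) - D.s ≤ ∑ i, y i) ∧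
  (∀ i, -t ≤ x i * y i ∧ x i * y i ≤ t) ∧ (∀ i, 0 ≤ y i ∧ y i ≤ 1 + D.ε)

/-- Multipliers for T-stationarity (defined on the whole index ranges). -/
structure TMult (n : ℕ) (P Q : Type*) where
  lam : P → ℝ
  mu1 : Q → ℝ
  mu2 : Fin n → ℝ
  mu3 : ℝ
  sig1 : Fin n → ℝ
  sig2 : Fin n → ℝ
  rho1 : Fin n → ℝ
  rho2 : Fin n → ℝ

/-- The T-stationarity equation (1) of Definition 2. -/
def TStatEq (D : Setting n P Q) (x y : Vec n) (M : TMult n P Q) : Prop :=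
  ((grad D.f x, D.c) : Vec n × Vec n) =
    (∑ p, M.lam p • ((grad (D.h p) x, (0 : Vec n)) : Vec n × Vec n))
    + (∑ q ∈ Q0 D x, M.mu1 q • ((grad (D.g q) x, (0 : Vec n)) : Vec n × Vec n))
    - (∑ i ∈ Eact D y, M.mu2 i • ey i)
    + M.mu3 • eAll
    + (∑ i ∈ a01 x y, M.sig1 i • ex i)
    + (∑ i ∈ a10 x y, M.sig2 i • ey i)
    + (∑ i ∈ a00 x y, (M.rho1 i • ex i + M.rho2 i • ey i))

/-- (x,y) is a T-stationary point of R with multipliers M. -/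
def TStatAt (D : Setting n P Q) (x y : Vec n) (M : TMult n P Q) : Prop :=
  feasR D x y ∧
  (∀ q ∈ Q0 D x, 0 ≤ M.mu1 q) ∧
  (∀ i ∈ Eact D y, 0 ≤ M.mu2 i) ∧
  0 ≤ M.mu3 ∧
  M.mu3 * ((∑ i, y i) - ((n : ℝ) - D.s)) = 0 ∧
  (∀ i ∈ a00 x y, M.rho1 i = 0 ∨ M.rho2 i ≤ 0) ∧
  TStatEq D x y M

/-- (x,y) is a T-stationary point of R. -/
def TStat (D : Setting n P Q) (x y : Vec n) : Prop := ∃ M, TStatAt D x y M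

/-- MPOC-tailored LICQ at a feasible point (x,y) of R: the indicated family of
vectors in ℝ²ⁿ is linearly independent. -/
def MPOC_LICQ (D : Setting n P Q) (x y : Vec n) : Prop :=
  ∀ (lam : P → ℝ) (mu1 : Q → ℝ) (mu2 : Fin n → ℝ) (mu3 : ℝ) (s1 s2 : Fin n → ℝ),
    ((∑ i, y i) ≠ (n : ℝ) - D.s → mu3 = 0) →
    (∑ p, lam p • ((grad (D.h p) x, (0 : Vec n)) : Vec n × Vec n))
    + (∑ q ∈ Q0 D x, mu1 q • ((grad (D.g q) x, (0 : Vec n)) : Vec n × Vec n))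
    + (∑ i ∈ Eact D y, mu2 i • ey i)
    + mu3 • eAll
    + (∑ i ∈ a01 x y ∪ a00 x y, s1 i • ex i)
    + (∑ i ∈ a10 x y ∪ a00 x y, s2 i • ey i) = 0 →
    (∀ p, lam p = 0) ∧ (∀ q ∈ Q0 D x, mu1 q = 0) ∧ (∀ i ∈ Eact D y, mu2 i = 0) ∧
    mu3 = 0 ∧ (∀ i ∈ a01 x y ∪ a00 x y, s1 i = 0) ∧ (∀ i ∈ a10 x y ∪ a00 x y, s2 i = 0)

/-- The Lagrange function L^R associated with the T-stationary point (x̄,ȳ)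
and multipliers M. -/
def LagR (D : Setting n P Q) (xb yb : Vec n) (M : TMult n P Q) (z : Vec n × Vec n) : ℝ :=
  D.f z.1 + dot D.c z.2
    - (∑ p, M.lam p * D.h p z.1)
    - (∑ q ∈ Q0 D xb, M.mu1 q * D.g q z.1)
    + (∑ i ∈ Eact D yb, M.mu2 i * (z.2 i - (1 + D.ε)))
    - M.mu3 * ((∑ i, z.2 i) - ((n : ℝ) - D.s))
    - (∑ i ∈ a01 xb yb, M.sig1 i * z.1 i)
    - (∑ i ∈ a10 xb yb, M.sig2 i * z.2 i)
    - (∑ i ∈ a00 xb yb, (M.rho1 i * z.1 i + M.rho2 i * z.2 i))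

/-- Membership in the tangent space T^R at (x̄,ȳ). -/
def inTR (D : Setting n P Q) (x y : Vec n) (ξ : Vec n × Vec n) : Prop :=
  (∀ p, dot (grad (D.h p) x) ξ.1 = 0) ∧
  (∀ q ∈ Q0 D x, dot (grad (D.g q) x) ξ.1 = 0) ∧
  (∀ i ∈ Eact D y, ξ.2 i = 0) ∧
  ((∑ i, y i) = (n : ℝ) - D.s → (∑ i, ξ.2 i) = 0) ∧
  (∀ i ∈ a00 x y ∪ a01 x y, ξ.1 i = 0) ∧
  (∀ i ∈ a00 x y ∪ a10 x y, ξ.2 i = 0)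

/-- Nondegenerate T-stationary point with multipliers M (NDT1–NDT4). -/
def NondegTStatAt (D : Setting n P Q) (x y : Vec n) (M : TMult n P Q) : Prop :=
  TStatAt D x y M ∧
  MPOC_LICQ D x y ∧
  (∀ q ∈ Q0 D x, 0 < M.mu1 q) ∧
  (∀ i ∈ Eact D y, 0 < M.mu2 i) ∧
  ((∑ i, y i) = (n : ℝ) - D.s → 0 < M.mu3) ∧
  (∀ i ∈ a00 x y, M.rho1 i ≠ 0 ∧ M.rho2 i < 0) ∧
  (∀ ξ, inTR D x y ξ → (∀ ζ, inTR D x y ζ → hess (LagR D x y M) (x, y) ξ ζ = 0) → ξ = 0)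

/-- T-index: quadratic index (number of negative eigenvalues of the restricted
Hessian of L^R) plus the biactive index |a00|. -/
def TIndex (D : Setting n P Q) (x y : Vec n) (M : TMult n P Q) : ℕ :=
  negIndex (hess (LagR D x y M) (x, y)) (inTR D x y) + (a00 x y).card

/-- Multipliers for KKT points of S(t) (defined on the whole index ranges). -/
structure SMult (n : ℕ) (P Q : Type*) where
  lam : P → ℝ
  mu1 : Q → ℝ
  mu2 : Fin n → ℝ
  mu3 : ℝ
  etaGe : Fin n → ℝ
  etaLe : Fin n → ℝ
  nu : Fin n → ℝ

/-- The KKT equation for S(t). -/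
def KKTEq (D : Setting n P Q) (t : ℝ) (x y : Vec n) (M : SMult n P Q) : Prop :=
  ((grad D.f x, D.c) : Vec n × Vec n) =
    (∑ p, M.lam p • ((grad (D.h p) x, (0 : Vec n)) : Vec n × Vec n))
    + (∑ q ∈ Q0 D x, M.mu1 q • ((grad (D.g q) x, (0 : Vec n)) : Vec n × Vec n))
    - (∑ i ∈ Eact D y, M.mu2 i • ey i)
    + M.mu3 • eAll
    + (∑ i ∈ Hge t x y, M.etaGe i • hvec x y i)
    - (∑ i ∈ Hle t x y, M.etaLe i • hvec x y i)
    + (∑ i ∈ Nact y, M.nu i • ey i)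

/-- (x,y) is a KKT point of S(t) with multipliers M. -/
def KKTAt (D : Setting n P Q) (t : ℝ) (x y : Vec n) (M : SMult n P Q) : Prop :=
  feasS D t x y ∧
  (∀ q ∈ Q0 D x, 0 ≤ M.mu1 q) ∧
  (∀ i ∈ Eact D y, 0 ≤ M.mu2 i) ∧
  0 ≤ M.mu3 ∧
  M.mu3 * ((∑ i, y i) - ((n : ℝ) - D.s)) = 0 ∧
  (∀ i ∈ Hge t x y, 0 ≤ M.etaGe i) ∧
  (∀ i ∈ Hle t x y, 0 ≤ M.etaLe i) ∧
  (∀ i ∈ Nact y, 0 ≤ M.nu i) ∧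
  KKTEq D t x y M

/-- (x,y) is a KKT point of S(t). -/
def KKT (D : Setting n P Q) (t : ℝ) (x y : Vec n) : Prop := ∃ M, KKTAt D t x y M

/-- LICQ at a feasible point (x,y) of S(t). -/
def LICQ (D : Setting n P Q) (t : ℝ) (x y : Vec n) : Prop :=
  ∀ (lam : P → ℝ) (mu1 : Q → ℝ) (mu2 : Fin n → ℝ) (mu3 : ℝ) (eta nu : Fin n → ℝ),
    ((∑ i, y i) ≠ (n : ℝ) - D.s → mu3 = 0) →
    (∑ p, lam p • ((grad (D.h p) x, (0 : Vec n)) : Vec n × Vec n))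
    + (∑ q ∈ Q0 D x, mu1 q • ((grad (D.g q) x, (0 : Vec n)) : Vec n × Vec n))
    + (∑ i ∈ Eact D y, mu2 i • ey i)
    + mu3 • eAll
    + (∑ i ∈ Hact t x y, eta i • hvec x y i)
    + (∑ i ∈ Nact y, nu i • ey i) = 0 →
    (∀ p, lam p = 0) ∧ (∀ q ∈ Q0 D x, mu1 q = 0) ∧ (∀ i ∈ Eact D y, mu2 i = 0) ∧
    mu3 = 0 ∧ (∀ i ∈ Hact t x y, eta i = 0) ∧ (∀ i ∈ Nact y, nu i = 0)

/-- The Lagrange function L^S associated with the KKT point (x̄,ȳ) of S(t)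
and multipliers M. -/
def LagS (D : Setting n P Q) (t : ℝ) (xb yb : Vec n) (M : SMult n P Q)
    (z : Vec n × Vec n) : ℝ :=
  D.f z.1 + dot D.c z.2
    - (∑ p, M.lam p * D.h p z.1)
    - (∑ q ∈ Q0 D xb, M.mu1 q * D.g q z.1)
    + (∑ i ∈ Eact D yb, M.mu2 i * (z.2 i - (1 + D.ε)))
    - M.mu3 * ((∑ i, z.2 i) - ((n : ℝ) - D.s))
    - (∑ i ∈ Hge t xb yb, M.etaGe i * (z.1 i * z.2 i + t))
    + (∑ i ∈ Hle t xb yb, M.etaLe i * (z.1 i * z.2 i - t))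
    - (∑ i ∈ Nact yb, M.nu i * z.2 i)

/-- Membership in the tangent space T^S at (x,y) for S(t). -/
def inTS (D : Setting n P Q) (t : ℝ) (x y : Vec n) (ξ : Vec n × Vec n) : Prop :=
  (∀ p, dot (grad (D.h p) x) ξ.1 = 0) ∧
  (∀ q ∈ Q0 D x, dot (grad (D.g q) x) ξ.1 = 0) ∧
  (∀ i ∈ Eact D y, ξ.2 i = 0) ∧
  ((∑ i, y i) = (n : ℝ) - D.s → (∑ i, ξ.2 i) = 0) ∧
  (∀ i ∈ Hact t x y, y i * ξ.1 i + x i * ξ.2 i = 0) ∧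
  (∀ i ∈ Nact y, ξ.2 i = 0)

/-- Nondegenerate KKT point of S(t) with multipliers M (ND1–ND3). -/
def NondegKKTAt (D : Setting n P Q) (t : ℝ) (x y : Vec n) (M : SMult n P Q) : Prop :=
  KKTAt D t x y M ∧
  LICQ D t x y ∧
  (∀ q ∈ Q0 D x, 0 < M.mu1 q) ∧
  (∀ i ∈ Eact D y, 0 < M.mu2 i) ∧
  (∀ i ∈ Hge t x y, 0 < M.etaGe i) ∧
  (∀ i ∈ Hle t x y, 0 < M.etaLe i) ∧
  (∀ i ∈ Nact y, 0 < M.nu i) ∧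
  ((∑ i, y i) = (n : ℝ) - D.s → 0 < M.mu3) ∧
  (∀ ξ, inTS D t x y ξ → (∀ ζ, inTS D t x y ζ → hess (LagS D t x y M) (x, y) ξ ζ = 0) → ξ = 0)

/-- Quadratic index of a KKT point of S(t): number of negative eigenvalues of
the restricted Hessian of L^S. -/
def QIdx (D : Setting n P Q) (t : ℝ) (x y : Vec n) (M : SMult n P Q) : ℕ :=
  negIndex (hess (LagS D t x y M) (x, y)) (inTS D t x y)

/-- Lemma 1a: at any T-stationary point of R the summation
inequality constraint is active. -/
theorem statement0 {n : ℕ} {P Q : Type*} [Fintype P] [Fintype Q]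
    (D : Setting n P Q) (x y : Vec n) (hT : TStat D x y) :
    (∑ i, y i) = (n : ℝ) - D.s := by
  obtain ⟨M, hfeas, hmu1, hmu2, hmu3nn, hcomp, hrho, hEq⟩ := hT
  by_contra hne
  have hsum : (n:ℝ) - D.s ≤ ∑ i, y i := hfeas.2.2.1
  have hns : (0:ℝ) < (n:ℝ) - D.s := by
    have : (D.s:ℝ) < (n:ℝ) := by exact_mod_cast D.hs
    linarith
  have hmu3 : M.mu3 = 0 := by
    rcases mul_eq_zero.mp hcomp with h | h
    · exact h
    · exact absurd (by linarith [sub_eq_zero.mp h]) hne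
  have hexi : ∃ i, 0 < y i := by
    by_contra h
    push_neg at h
    have : (∑ i, y i) ≤ 0 := Finset.sum_nonpos fun i _ => h i
    linarith
  obtain ⟨i, hyi⟩ := hexi
  have hxi : x i = 0 := by
    have := hfeas.2.2.2.1 i
    rcases mul_eq_zero.mp this with h | h
    · exact h
    · exact absurd h hyi.ne'
  have hia01 : i ∈ a01 x y := by simp [a01, hxi, hyi]
  have hia10 : i ∉ a10 x y := by simp [a10, hxi]
  have hia00 : i ∉ a00 x y := by simp [a00, hyi.ne']
  have hc := congrFun (congrArg Prod.snd hEq) i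
  simp only [Prod.snd_add, Prod.snd_sub, Prod.snd_sum, Prod.smul_snd, ex, ey, eAll,
    smul_zero, Finset.sum_const_zero, Finset.sum_apply, Pi.add_apply, Pi.sub_apply,
    Pi.smul_apply, smul_eq_mul, Pi.single_apply, mul_ite, mul_one, mul_zero,
    Finset.sum_ite_eq, Pi.zero_apply, add_zero, zero_add, hmu3, hia10, hia00,
    if_false, if_neg] at hc
  have hcpos := D.hcpos i
  split_ifs at hc with hE
  · have := hmu2 i hE
    linarith
  · linarith

end Scholtes
end
end

section
/- Let (x̄,ȳ) be a T-stationary point of the regularized continuous reformulation R, and let (λ̄,μ̄,σ̄,ϱ̄) be any multipliers realizing T-stationarity. Then the multiplier of the summation constraint is strictly positive: μ̄_3 > 0. -/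
open scoped Classical
open Finset Filter Topology

noncomputable section
namespace Scholtes

variable {n : ℕ} {P Q : Type*} [Fintype P] [Fintype Q]

/-- for any multipliers realizing T-stationarity, μ̄₃ > 0. -/
theorem statement1 {n : ℕ} {P Q : Type*} [Fintype P] [Fintype Q]
    (D : Setting n P Q) (x y : Vec n) (M : TMult n P Q)
    (hT : TStatAt D x y M) :
    0 < M.mu3 := by
  obtain ⟨hF, hmu1, hmu2, hmu3, _, _, hEq⟩ := hT
  have hsum := hF.2.2.1
  have hypos : ∃ i, 0 < y i := by
    by_contra h
    push_neg at h
    have hy0 : ∀ i, y i = 0 := fun i => le_antisymm (h i) (hF.2.2.2.2 i).1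
    have h0 : (∑ i, y i) = 0 := by simp [hy0]
    rw [h0] at hsum
    have hsn : (D.s : ℝ) < n := by exact_mod_cast D.hs
    linarith
  obtain ⟨i, hi⟩ := hypos
  have hi10 : ∀ j ∈ a10 x y, (Pi.single j (1:ℝ) : Vec n) i = 0 := by
    intro j hj
    simp only [a10, Finset.mem_filter] at hj
    have : j ≠ i := by rintro rfl; exact absurd hj.2.2 (by linarith)
    simp [Pi.single_apply, this]
  have hi00 : ∀ j ∈ a00 x y, (Pi.single j (1:ℝ) : Vec n) i = 0 := by
    intro j hj
    simp only [a00, Finset.mem_filter] at hj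
    have : j ≠ i := by rintro rfl; exact absurd hj.2.2 (by linarith)
    simp [Pi.single_apply, this]
  have hEq2 := congrFun (congrArg Prod.snd hEq) i
  unfold TStatEq at hEq2
  simp only [Prod.snd_sum, Prod.snd_add, Prod.snd_sub, Prod.smul_snd, ey, ex, eAll,
    smul_zero, Finset.sum_const_zero, Finset.sum_apply, Pi.add_apply, Pi.sub_apply,
    Pi.zero_apply, Pi.smul_apply, smul_eq_mul, mul_zero, zero_add, add_zero, mul_one] at hEq2
  have h10 : ∑ j ∈ a10 x y, M.sig2 j * (Pi.single j (1:ℝ) : Vec n) i = 0 :=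
    Finset.sum_eq_zero fun j hj => by rw [hi10 j hj, mul_zero]
  have h00 : ∑ j ∈ a00 x y, M.rho2 j * (Pi.single j (1:ℝ) : Vec n) i = 0 :=
    Finset.sum_eq_zero fun j hj => by rw [hi00 j hj, mul_zero]
  rw [h10, h00] at hEq2
  simp only [Finset.sum_const_zero, add_zero, zero_sub] at hEq2
  have hEsum : 0 ≤ ∑ j ∈ Eact D y, M.mu2 j * (Pi.single j (1:ℝ) : Vec n) i := by
    apply Finset.sum_nonneg
    intro j hj
    have := hmu2 j hj
    by_cases hji : j = i
    · subst hji; simp [Pi.single_apply]; positivity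
    · simp [Pi.single_apply, hji]
  have hc := D.hcpos i
  linarith [hEq2]

end Scholtes
end
end

section
/- Let (x̄,ȳ) be a T-stationary point of the regularized continuous reformulation R. Then the index set a01(x̄,ȳ) consists of exactly n−s elements. -/
open scoped Classical
open Finset Filter Topology

noncomputable section
namespace Scholtes

variable {n : ℕ} {P Q : Type*} [Fintype P] [Fintype Q]

private lemma sum_mul_single {n : ℕ} (s : Finset (Fin n)) (f : Fin n → ℝ) (i : Fin n) :
    (∑ j ∈ s, f j * (Pi.single j 1 : Vec n) i) = if i ∈ s then f i else 0 := by
  rw [Finset.sum_congr rfl (fun j _ => by rw [Pi.single_apply, mul_ite, mul_one, mul_zero])]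
  exact Finset.sum_ite_eq s i f

/-- Lemma 1b: at any T-stationary point of R the index set a01
consists of exactly n − s elements. -/
theorem statement2 {n : ℕ} {P Q : Type*} [Fintype P] [Fintype Q]
    (D : Setting n P Q) (x y : Vec n) (hT : TStat D x y) :
    (a01 x y).card = n - D.s := by
  obtain ⟨M, hF, hmu1, hmu2, hmu3nn, hcomp, _hrho, hEq⟩ := hT
  obtain ⟨_hh, _hg, hsum, hxy, hybd⟩ := hF
  set k : ℕ := n - D.s with hk
  have hkR : (k : ℝ) = (n : ℝ) - D.s := by
    rw [hk, Nat.cast_sub (le_of_lt D.hs)]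
  have hk1 : 1 ≤ k := by have := D.hs; omega
  have hε : 0 < D.ε := D.hεpos
  -- y vanishes off a01
  have hy0 : ∀ i, i ∉ a01 x y → y i = 0 := by
    intro i hi
    by_contra hne
    have hpos : 0 < y i := lt_of_le_of_ne (hybd i).1 (Ne.symm hne)
    have hx0 : x i = 0 := by
      rcases mul_eq_zero.mp (hxy i) with h | h
      · exact h
      · exact absurd h (ne_of_gt hpos)
    exact hi (by simp [a01, hx0, hpos])
  -- lower bound : n - s ≤ card a01
  have hlow : k ≤ (a01 x y).card := by
    by_contra hlt
    push_neg at hlt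
    have hsum_eq : ∑ i, y i = ∑ i ∈ a01 x y, y i := by
      refine (Finset.sum_subset (Finset.subset_univ _) ?_).symm
      intro i _ hi; exact hy0 i hi
    have hub : ∑ i ∈ a01 x y, y i ≤ ((a01 x y).card : ℝ) * (1 + D.ε) := by
      have h := Finset.sum_le_card_nsmul (a01 x y) y (1 + D.ε) (fun i _ => (hybd i).2)
      rw [nsmul_eq_mul] at h; exact h
    have hcard : ((a01 x y).card : ℝ) ≤ (k : ℝ) - 1 := by
      have : (a01 x y).card ≤ k - 1 := by omega
      have := (Nat.cast_le (α := ℝ)).mpr this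
      rw [Nat.cast_sub hk1] at this
      simpa using this
    have hεk : D.ε ≤ 1 / (k : ℝ) := by rw [hkR]; exact D.hεle
    have hkpos : (0:ℝ) < k := by exact_mod_cast hk1
    have h1 : ((k:ℝ) - 1) * (1 + D.ε) < k := by
      have h2 : ((k:ℝ) - 1) * (1 + D.ε) = (k - 1) + (k - 1) * D.ε := by ring
      have h3 : ((k:ℝ) - 1) * D.ε ≤ ((k:ℝ) - 1) * (1 / k) := by
        apply mul_le_mul_of_nonneg_left hεk
        linarith [hkpos, (Nat.one_le_cast (α := ℝ)).mpr hk1]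
      have h4 : ((k:ℝ) - 1) * (1 / k) < 1 := by
        rw [div_eq_mul_inv, one_mul, ← div_eq_mul_inv, div_lt_one hkpos]
        linarith
      linarith
    have hmul : (1 + D.ε) ≥ 0 := by linarith
    have : ((a01 x y).card : ℝ) * (1 + D.ε) ≤ ((k:ℝ) - 1) * (1 + D.ε) :=
      mul_le_mul_of_nonneg_right hcard hmul
    have hge : (k : ℝ) ≤ ((a01 x y).card : ℝ) * (1 + D.ε) := by
      rw [hkR]
      calc (n : ℝ) - D.s ≤ ∑ i, y i := hsum
        _ = ∑ i ∈ a01 x y, y i := hsum_eq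
        _ ≤ ((a01 x y).card : ℝ) * (1 + D.ε) := hub
    linarith
  -- componentwise y-equation at i ∈ a01
  have key : ∀ i ∈ a01 x y, D.c i = (if i ∈ Eact D y then -(M.mu2 i) else 0) + M.mu3 := by
    intro i hi
    have hia01 : x i = 0 ∧ 0 < y i := by simpa [a01] using hi
    have hi10 : i ∉ a10 x y := by simp [a10]; intro _; linarith [hia01.2]
    have hi00 : i ∉ a00 x y := by simp [a00]; intro _; linarith [hia01.2]
    have h2 := congrArg (fun z => (Prod.snd z) i) hEq
    simp only [TStatEq, Prod.snd_add, Prod.snd_sub, Prod.snd_sum, Prod.smul_snd,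
      Pi.add_apply, Pi.sub_apply, Finset.sum_apply, Pi.smul_apply, smul_eq_mul,
      ex, ey, eAll, smul_zero, Pi.zero_apply, mul_zero, mul_one,
      Finset.sum_const_zero, zero_add] at h2
    rw [sum_mul_single, sum_mul_single, sum_mul_single] at h2
    rw [if_neg hi10, if_neg hi00] at h2
    rw [h2]
    by_cases hE : i ∈ Eact D y <;> simp [hE]
  -- upper bound: card a01 ≤ k
  have hup : (a01 x y).card ≤ k := by
    by_contra hgt
    push_neg at hgt
    -- at most one i ∈ a01 outside Eact
    set A := (a01 x y).filter (fun i => i ∉ Eact D y) with hA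
    set B := (a01 x y).filter (fun i => i ∈ Eact D y) with hB
    have hABcard : B.card + A.card = (a01 x y).card := Finset.card_filter_add_card_filter_not _
    have hA1 : A.card ≤ 1 := by
      refine Finset.card_le_one.mpr ?_
      intro i hiA j hjA
      have hi' : i ∈ a01 x y ∧ i ∉ Eact D y := by simpa [hA] using hiA
      have hj' : j ∈ a01 x y ∧ j ∉ Eact D y := by simpa [hA] using hjA
      have hci := key i hi'.1
      have hcj := key j hj'.1
      rw [if_neg hi'.2] at hci
      rw [if_neg hj'.2] at hcj
      exact D.hcinj (by rw [hci, hcj])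
    have hBk : k ≤ B.card := by omega
    have hBne : B.Nonempty := Finset.card_pos.mp (by omega)
    -- sum of y exceeds n - s
    have hBsum : ∀ i ∈ B, y i = 1 + D.ε := by
      intro i hiB
      have : i ∈ Eact D y := (Finset.mem_filter.mp hiB).2
      simpa [Eact] using this
    have hsum_gt : (n : ℝ) - D.s < ∑ i, y i := by
      have h1 : ∑ i ∈ B, y i ≤ ∑ i, y i := by
        apply Finset.sum_le_sum_of_subset_of_nonneg (Finset.subset_univ _)
        intro i _ _; exact (hybd i).1
      have h2 : ∑ i ∈ B, y i = B.card * (1 + D.ε) := by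
        rw [Finset.sum_congr rfl hBsum, Finset.sum_const, nsmul_eq_mul]
      have h3 : (k : ℝ) * (1 + D.ε) ≤ B.card * (1 + D.ε) := by
        apply mul_le_mul_of_nonneg_right _ (by linarith)
        exact_mod_cast hBk
      have h4 : (k : ℝ) < (k : ℝ) * (1 + D.ε) := by
        have hkpos : (0:ℝ) < k := by exact_mod_cast hk1
        nlinarith
      rw [← hkR]; linarith [h2 ▸ h1]
    have hmu3 : M.mu3 = 0 := by
      rcases mul_eq_zero.mp hcomp with h | h
      · exact h
      · exfalso; linarith [sub_eq_zero.mp h, hsum_gt]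
    obtain ⟨i, hiB⟩ := hBne
    have hiE : i ∈ Eact D y := (Finset.mem_filter.mp hiB).2
    have hci := key i (Finset.mem_filter.mp hiB).1
    rw [if_pos hiE, hmu3] at hci
    have := hmu2 i hiE
    have := D.hcpos i
    linarith [hci]
  omega

end Scholtes
end
end

section
/- Let (x̄,ȳ) be a T-stationary point of the regularized continuous reformulation R. Then exactly n−s−1 components of ȳ are equal to 1+ε, exactly one component of ȳ is equal to 1−(n−s−1)ε, and the remaining s components of ȳ vanish. -/
open scoped Classical
open Finset Filter Topology

noncomputable section
namespace Scholtes

variable {n : ℕ} {P Q : Type*} [Fintype P] [Fintype Q]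

lemma ycoord (D : Setting n P Q) (x y : Vec n) (M : TMult n P Q)
    (hEq : TStatEq D x y M) (i : Fin n) :
    D.c i = M.mu3 - (if i ∈ Eact D y then M.mu2 i else 0)
      + (if i ∈ a10 x y then M.sig2 i else 0)
      + (if i ∈ a00 x y then M.rho2 i else 0) := by
  have h2 := congrFun (congrArg Prod.snd hEq) i
  simp only [Prod.snd_sum, Prod.snd_add, Prod.snd_sub, Prod.smul_snd, ex, ey, eAll,
    smul_zero, Finset.sum_const_zero, Finset.sum_apply, Pi.add_apply, Pi.sub_apply,
    Pi.smul_apply, Pi.single_apply, smul_eq_mul, mul_ite, mul_one, mul_zero,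
    Finset.sum_ite_eq, zero_add, add_zero, Pi.zero_apply, Pi.one_apply] at h2
  rw [h2]; ring

/-- Lemma 1c: at any T-stationary point of R exactly n−s−1
components of ȳ equal 1+ε, exactly one equals 1−(n−s−1)ε, and the remaining
s components vanish. -/
theorem statement3 {n : ℕ} {P Q : Type*} [Fintype P] [Fintype Q]
    (D : Setting n P Q) (x y : Vec n) (hT : TStat D x y) :
    (Finset.univ.filter fun i => y i = 1 + D.ε).card = n - D.s - 1 ∧
    (Finset.univ.filter fun i => y i = 1 - ((n : ℝ) - D.s - 1) * D.ε).card = 1 ∧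
    (Finset.univ.filter fun i => y i = 0).card = D.s := by
  classical
  obtain ⟨M, hfeas, hmu1, hmu2nn, hmu3nn, hcompl, hrho, hEq⟩ := hT
  obtain ⟨hh, hgpos, hsum, hxy, hbox⟩ := hfeas
  set r : ℝ := (n : ℝ) - D.s with hr
  have hεpos := D.hεpos
  have hr1 : (1:ℝ) ≤ r := by
    have : (D.s : ℝ) + 1 ≤ n := by exact_mod_cast D.hs
    simp [hr]; linarith
  have hrpos : (0:ℝ) < r := by linarith
  have hεr : D.ε * r ≤ 1 := by
    have := D.hεle
    rw [le_div_iff₀ hrpos] at this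
    exact this
  -- x vanishes where y is positive
  have hx0 : ∀ i, 0 < y i → x i = 0 := by
    intro i hy
    rcases mul_eq_zero.mp (hxy i) with h | h
    · exact h
    · exact absurd h hy.ne'
  have hεsmall : D.ε ≤ 1 := by
    calc D.ε = D.ε * 1 := by ring
    _ ≤ D.ε * r := by nlinarith
    _ ≤ 1 := hεr
  -- fact A : middle components have c i = mu3
  have hA : ∀ i, 0 < y i → y i ≠ 1 + D.ε → D.c i = M.mu3 := by
    intro i hy hne
    have := ycoord D x y M hEq i
    rw [if_neg, if_neg, if_neg] at this
    · linarith [this]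
    · simp [a00]; intro _; exact hy.ne'
    · simp [a10]; intro _; exact hy.ne'
    · simp [Eact]; exact hne
  -- fact B : components at the upper bound have c i = mu3 - mu2 i
  have hB : ∀ i, y i = 1 + D.ε → D.c i = M.mu3 - M.mu2 i ∧ 0 ≤ M.mu2 i := by
    intro i hy
    have hypos : 0 < y i := by rw [hy]; linarith
    have hmem : i ∈ Eact D y := by simp [Eact, hy]
    have := ycoord D x y M hEq i
    rw [if_pos hmem, if_neg, if_neg] at this
    · exact ⟨by linarith [this], hmu2nn i hmem⟩
    · simp [a00]; intro _; exact hypos.ne'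
    · simp [a10]; intro _; exact hypos.ne'
  set E : Finset (Fin n) := Eact D y with hE
  set Mid : Finset (Fin n) := univ.filter (fun i => 0 < y i ∧ y i ≠ 1 + D.ε) with hMid
  have hMidmem : ∀ i, i ∈ Mid ↔ 0 < y i ∧ y i ≠ 1 + D.ε := by intro i; simp [hMid]
  have hEmem : ∀ i, i ∈ E ↔ y i = 1 + D.ε := by intro i; simp [hE, Eact]
  have hMidcard : Mid.card ≤ 1 := by
    refine Finset.card_le_one.mpr ?_
    intro a ha b hb
    rw [hMidmem] at ha hb
    exact D.hcinj ((hA a ha.1 ha.2).trans (hA b hb.1 hb.2).symm)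
  -- trichotomy
  have htri : ∀ i, y i = 0 ∨ y i = 1 + D.ε ∨ i ∈ Mid := by
    intro i
    by_cases h0 : y i = 0
    · exact Or.inl h0
    by_cases h1 : y i = 1 + D.ε
    · exact Or.inr (Or.inl h1)
    exact Or.inr (Or.inr ((hMidmem i).mpr ⟨lt_of_le_of_ne (hbox i).1 (Ne.symm h0), h1⟩))
  -- sum decomposition
  have hdec : ∑ i, y i = (E.card : ℝ) * (1 + D.ε) + ∑ i ∈ Mid, y i := by
    have hsplit := Finset.sum_filter_add_sum_filter_not univ (fun i => y i = 1 + D.ε) y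
    have h1 : ∑ i ∈ univ.filter (fun i => y i = 1 + D.ε), y i = (E.card : ℝ) * (1 + D.ε) := by
      rw [Finset.sum_congr rfl (fun i hi => by
        simp only [Finset.mem_filter] at hi; exact hi.2), Finset.sum_const]
      have : univ.filter (fun i => y i = 1 + D.ε) = E := by ext i; simp [hE, Eact]
      rw [this, nsmul_eq_mul]
    have h2 : ∑ i ∈ univ.filter (fun i => ¬ y i = 1 + D.ε), y i = ∑ i ∈ Mid, y i := by
      refine (Finset.sum_subset ?_ ?_).symm
      · intro i hi
        rw [hMidmem] at hi
        simp [hi.2]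
      · intro i hi hni
        simp only [Finset.mem_filter, Finset.mem_univ, true_and] at hi
        rw [hMidmem] at hni
        push_neg at hni
        rcases htri i with h | h | h
        · exact h
        · exact absurd h hi
        · rw [hMidmem] at h; exact absurd (hni h.1) h.2
    linarith [hsplit, h1, h2]
  set k : ℕ := E.card with hk
  -- k + s < n  fails only when there is no middle component; main case analysis
  rcases Finset.eq_empty_or_nonempty Mid with hMe | hMne
  · -- no middle component : contradiction
    exfalso
    have hsumk : ∑ i, y i = (k:ℝ) * (1 + D.ε) := by rw [hdec, hMe]; simp
    have hge : r ≤ (k:ℝ) * (1 + D.ε) := by rw [← hsumk]; exact hsum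
    have hkpos : 1 ≤ k := by
      by_contra h
      push_neg at h
      interval_cases k
      · simp at hge; linarith
    by_cases hzero : ∑ i, y i = r
    · -- k(1+ε) = r is impossible
      rw [hsumk] at hzero
      -- k < n - s and k ≥ n - s - 1 in ℕ
      have hklt : (k:ℝ) < r := by nlinarith
      have hkge : r - 1 ≤ (k:ℝ) := by nlinarith
      have hnk : ((k:ℕ):ℝ) + (D.s:ℝ) < (n:ℝ) := by rw [hr] at hklt; linarith
      have hnk' : k + D.s < n := by exact_mod_cast hnk
      have hnk2 : ((n:ℝ)) ≤ (k:ℝ) + (D.s:ℝ) + 1 := by rw [hr] at hkge; linarith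
      have hnk2' : n ≤ k + D.s + 1 := by exact_mod_cast hnk2
      have hkeq : k + D.s + 1 = n := by omega
      have hkr : (k:ℝ) = r - 1 := by
        have : ((k:ℕ):ℝ) + (D.s:ℝ) + 1 = (n:ℝ) := by exact_mod_cast hkeq
        rw [hr]; linarith
      rw [hkr] at hzero
      -- (r-1)(1+ε) = r  ⇒ (r-1)ε = 1, but (r-1)ε ≤ 1 - ε < 1
      nlinarith
    · have hmu3 : M.mu3 = 0 := by
        rcases mul_eq_zero.mp hcompl with h | h
        · exact h
        · exfalso; exact hzero (by linarith [sub_eq_zero.mp h])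
      obtain ⟨i, hi⟩ : ∃ i, i ∈ E := by
        rcases Finset.card_pos.mp (lt_of_lt_of_le Nat.zero_lt_one hkpos) with ⟨i, hi⟩
        exact ⟨i, hi⟩
      obtain ⟨hci, hmi⟩ := hB i ((hEmem i).mp hi)
      have := D.hcpos i
      rw [hmu3] at hci
      linarith
  · -- exactly one middle component
    have hMcard : Mid.card = 1 := le_antisymm hMidcard (Finset.card_pos.mpr hMne)
    obtain ⟨i₀, hi₀⟩ := Finset.card_eq_one.mp hMcard
    have hi₀mem : i₀ ∈ Mid := by rw [hi₀]; simp
    obtain ⟨hv0, hvne⟩ := (hMidmem i₀).mp hi₀mem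
    have hv1 : y i₀ < 1 + D.ε := lt_of_le_of_ne (hbox i₀).2 hvne
    have hmu3 : M.mu3 = D.c i₀ := (hA i₀ hv0 hvne).symm
    have hmu3pos : 0 < M.mu3 := hmu3 ▸ D.hcpos i₀
    have hsumr : ∑ i, y i = r := by
      rcases mul_eq_zero.mp hcompl with h | h
      · exact absurd h hmu3pos.ne'
      · linarith [sub_eq_zero.mp h]
    have hsumk : (k:ℝ) * (1 + D.ε) + y i₀ = r := by
      rw [← hsumr, hdec, hi₀]; simp
    -- pin down k = n - s - 1
    have hklt : (k:ℝ) < r := by nlinarith [Nat.cast_nonneg (α := ℝ) k]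
    have hkge : r - 2 < (k:ℝ) := by nlinarith [Nat.cast_nonneg (α := ℝ) k]
    have hnk' : k + D.s < n := by
      have : ((k:ℕ):ℝ) + (D.s:ℝ) < (n:ℝ) := by rw [hr] at hklt; linarith
      exact_mod_cast this
    have hnk2' : n < k + D.s + 2 := by
      have : (n:ℝ) < ((k:ℕ):ℝ) + (D.s:ℝ) + 2 := by rw [hr] at hkge; linarith
      exact_mod_cast this
    have hkeq : k + D.s + 1 = n := by omega
    have hkr : (k:ℝ) = r - 1 := by
      have : ((k:ℕ):ℝ) + (D.s:ℝ) + 1 = (n:ℝ) := by exact_mod_cast hkeq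
      rw [hr]; linarith
    -- value of the middle component
    have hvval : y i₀ = 1 - (r - 1) * D.ε := by rw [hkr] at hsumk; linarith [hsumk]
    refine ⟨?_, ?_, ?_⟩
    · -- count of 1+ε components
      have : univ.filter (fun i => y i = 1 + D.ε) = E := by ext i; simp [hE, Eact]
      rw [this, ← hk]; omega
    · -- count of middle components
      have hfm : univ.filter (fun i => y i = 1 - ((n:ℝ) - D.s - 1) * D.ε) = Mid := by
        ext i
        simp only [Finset.mem_filter, Finset.mem_univ, true_and, hMidmem]
        rw [← hr]
        constructor
        · intro hv
          rw [← hvval] at hv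
          exact ⟨hv ▸ hv0, hv ▸ hvne⟩
        · intro hi
          have : i ∈ Mid := (hMidmem i).mpr hi
          rw [hi₀, Finset.mem_singleton] at this
          rw [this, hvval]
      rw [hfm, hMcard]
    · -- count of zero components
      set Z : Finset (Fin n) := univ.filter (fun i => y i = 0) with hZ
      have hdisj1 : Disjoint Z E := by
        rw [Finset.disjoint_left]
        intro i hiZ hiE
        rw [hEmem] at hiE
        simp only [hZ, Finset.mem_filter] at hiZ
        rw [hiZ.2] at hiE
        linarith
      have hdisj2 : Disjoint Z Mid := by
        rw [Finset.disjoint_left]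
        intro i hiZ hiM
        rw [hMidmem] at hiM
        simp only [hZ, Finset.mem_filter] at hiZ
        exact absurd hiZ.2.symm hiM.1.ne
      have hdisj3 : Disjoint E Mid := by
        rw [Finset.disjoint_left]
        intro i hiE hiM
        rw [hMidmem] at hiM
        exact hiM.2 ((hEmem i).mp hiE)
      have hcover : Z ∪ E ∪ Mid = univ := by
        ext i
        simp only [Finset.mem_union, Finset.mem_univ, iff_true]
        rcases htri i with h | h | h
        · exact Or.inl (Or.inl (by simp [hZ, h]))
        · exact Or.inl (Or.inr ((hEmem i).mpr h))
        · exact Or.inr h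
      have hcards : Z.card + E.card + Mid.card = n := by
        have := Finset.card_union_of_disjoint
          (Finset.disjoint_union_left.mpr ⟨hdisj2, hdisj3⟩)
        rw [hcover] at this
        rw [Finset.card_union_of_disjoint hdisj1] at this
        simpa using this.symm
      rw [← hk] at hcards
      omega


end Scholtes
end
end

section
/- Let (x̄,ȳ) be a feasible point of the regularized continuous reformulation R at which MPOC-LICQ holds. Then there exist t̄ > 0 and δ > 0 such that for every t ∈ (0, t̄) and every feasible point (x,y) of the Scholtes-type regularization S(t) with ‖(x,y)−(x̄,ȳ)‖ < δ, LICQ holds at (x,y). -/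
open scoped Classical
open Finset Filter Topology

noncomputable section
namespace Scholtes

variable {n : ℕ} {P Q : Type*} [Fintype P] [Fintype Q]

section Statement4Aux

/-- Coefficient space for the MPOC-LICQ linear map. -/
abbrev Coef (n : ℕ) (P Q : Type*) : Type _ :=
  (P → ℝ) × (Q → ℝ) × (Fin n → ℝ) × ℝ × (Fin n → ℝ) × (Fin n → ℝ)

lemma grad_continuous {f : Vec n → ℝ} (hf : ContDiff ℝ 2 f) :
    Continuous fun x : Vec n => grad f x := by
  apply continuous_pi
  intro i
  exact ((hf.continuous_fderiv (by norm_num)).clm_apply continuous_const)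

lemma a01_union_a00 (x y : Vec n) (hy : ∀ i, 0 ≤ y i) :
    a01 x y ∪ a00 x y = univ.filter fun i => x i = 0 := by
  ext i
  simp only [Finset.mem_union, a01, a00, Finset.mem_filter, Finset.mem_univ, true_and]
  constructor
  · rintro (⟨h, _⟩ | ⟨h, _⟩) <;> exact h
  · intro h
    rcases (hy i).lt_or_eq with h' | h'
    · exact Or.inl ⟨h, h'⟩
    · exact Or.inr ⟨h, h'.symm⟩

lemma a10_union_a00 (x y : Vec n) :
    a10 x y ∪ a00 x y = univ.filter fun i => y i = 0 := by
  ext i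
  simp only [Finset.mem_union, a10, a00, Finset.mem_filter, Finset.mem_univ, true_and]
  constructor
  · rintro (⟨_, h⟩ | ⟨_, h⟩) <;> exact h
  · intro h
    by_cases hx : x i = 0
    · exact Or.inr ⟨hx, h⟩
    · exact Or.inl ⟨hx, h⟩

lemma hvec_eq (x y : Vec n) (i : Fin n) :
    hvec x y i = y i • ex i + x i • ey i := by
  simp only [hvec, ex, ey, Prod.smul_mk, Prod.mk_add_mk, smul_zero, add_zero, zero_add]
  congr 1 <;> rw [← Pi.single_smul, smul_eq_mul, mul_one]

lemma pairadd (u v : Vec n) (c : ℝ) :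
    c • ((u, (0 : Vec n)) : Vec n × Vec n) + c • ((v - u, (0 : Vec n)) : Vec n × Vec n)
      = c • ((v, (0 : Vec n)) : Vec n × Vec n) := by
  rw [← smul_add, Prod.mk_add_mk, add_zero]
  have : u + (v - u) = v := by abel
  rw [this]

lemma pair_norm_left (u : Vec n) : ‖((u, (0 : Vec n)) : Vec n × Vec n)‖ = ‖u‖ := by
  rw [Prod.norm_def, norm_zero, max_eq_left (norm_nonneg u)]

lemma ey_norm (i : Fin n) : ‖(ey i : Vec n × Vec n)‖ = 1 := by
  rw [ey, Prod.norm_def, norm_zero, Pi.norm_single, norm_one, max_eq_right zero_le_one]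

lemma ex_norm (i : Fin n) : ‖(ex i : Vec n × Vec n)‖ = 1 := by
  rw [ex, Prod.norm_def, norm_zero, Pi.norm_single, norm_one, max_eq_left zero_le_one]

lemma coef_bounds (l : P → ℝ) (m1 : Q → ℝ) (m2 : Fin n → ℝ) (m3 : ℝ) (t1 t2 : Fin n → ℝ) :
    (∀ p, |l p| ≤ ‖((l, m1, m2, m3, t1, t2) : Coef n P Q)‖) ∧
    (∀ q, |m1 q| ≤ ‖((l, m1, m2, m3, t1, t2) : Coef n P Q)‖) ∧
    (∀ i, |m2 i| ≤ ‖((l, m1, m2, m3, t1, t2) : Coef n P Q)‖) ∧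
    |m3| ≤ ‖((l, m1, m2, m3, t1, t2) : Coef n P Q)‖ ∧
    (∀ i, |t1 i| ≤ ‖((l, m1, m2, m3, t1, t2) : Coef n P Q)‖) ∧
    (∀ i, |t2 i| ≤ ‖((l, m1, m2, m3, t1, t2) : Coef n P Q)‖) := by
  set a : Coef n P Q := (l, m1, m2, m3, t1, t2) with ha
  have h2 : ‖a.2‖ ≤ ‖a‖ := norm_snd_le a
  have h3 : ‖a.2.2‖ ≤ ‖a.2‖ := norm_snd_le a.2
  have h4 : ‖a.2.2.2‖ ≤ ‖a.2.2‖ := norm_snd_le a.2.2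
  have h5 : ‖a.2.2.2.2‖ ≤ ‖a.2.2.2‖ := norm_snd_le a.2.2.2
  refine ⟨fun p => ?_, fun q => ?_, fun i => ?_, ?_, fun i => ?_, fun i => ?_⟩
  · simpa using (norm_le_pi_norm l p).trans (norm_fst_le a)
  · simpa using (norm_le_pi_norm m1 q).trans ((norm_fst_le a.2).trans h2)
  · simpa using (norm_le_pi_norm m2 i).trans (((norm_fst_le a.2.2).trans h3).trans h2)
  · simpa using (norm_fst_le a.2.2.2).trans ((h4.trans h3).trans h2)
  · simpa using (norm_le_pi_norm t1 i).trans
      ((norm_fst_le a.2.2.2.2).trans (((h5.trans h4).trans h3).trans h2))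
  · simpa using (norm_le_pi_norm t2 i).trans
      ((norm_snd_le a.2.2.2.2).trans (((h5.trans h4).trans h3).trans h2))

/-- The linear map associated with the MPOC-LICQ family at `(x, y)`. -/
def Phi (D : Setting n P Q) (x y : Vec n) : Coef n P Q →ₗ[ℝ] Vec n × Vec n where
  toFun a := (∑ p, a.1 p • ((grad (D.h p) x, (0 : Vec n)) : Vec n × Vec n))
    + (∑ q ∈ Q0 D x, a.2.1 q • ((grad (D.g q) x, (0 : Vec n)) : Vec n × Vec n))
    + (∑ i ∈ Eact D y, a.2.2.1 i • ey i)
    + a.2.2.2.1 • eAll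
    + (∑ i ∈ a01 x y ∪ a00 x y, a.2.2.2.2.1 i • ex i)
    + (∑ i ∈ a10 x y ∪ a00 x y, a.2.2.2.2.2 i • ey i)
  map_add' a b := by
    simp only [Prod.fst_add, Prod.snd_add, Pi.add_apply, add_smul, Finset.sum_add_distrib]
    abel
  map_smul' c a := by
    simp only [Prod.smul_fst, Prod.smul_snd, Pi.smul_apply, smul_eq_mul, mul_smul,
      RingHom.id_apply, smul_add, Finset.smul_sum]

/-- The subspace of admissible multiplier tuples at `(x, y)`. -/
def Ksub (D : Setting n P Q) (x y : Vec n) : Submodule ℝ (Coef n P Q) where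
  carrier := {a | (∀ q, q ∉ Q0 D x → a.2.1 q = 0) ∧ (∀ i, i ∉ Eact D y → a.2.2.1 i = 0) ∧
    ((∑ i, y i) ≠ (n : ℝ) - D.s → a.2.2.2.1 = 0) ∧
    (∀ i, i ∉ a01 x y ∪ a00 x y → a.2.2.2.2.1 i = 0) ∧
    (∀ i, i ∉ a10 x y ∪ a00 x y → a.2.2.2.2.2 i = 0)}
  add_mem' := by
    rintro a b ⟨ha1, ha2, ha3, ha4, ha5⟩ ⟨hb1, hb2, hb3, hb4, hb5⟩
    refine ⟨fun q hq => ?_, fun i hi => ?_, fun h => ?_, fun i hi => ?_, fun i hi => ?_⟩ <;>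
      simp_all
  zero_mem' := by
    refine ⟨fun q _ => rfl, fun i _ => rfl, fun _ => rfl, fun i _ => rfl, fun i _ => rfl⟩
  smul_mem' := by
    rintro c a ⟨ha1, ha2, ha3, ha4, ha5⟩
    refine ⟨fun q hq => ?_, fun i hi => ?_, fun h => ?_, fun i hi => ?_, fun i hi => ?_⟩ <;>
      simp_all

lemma mem_Ksub {D : Setting n P Q} {x y : Vec n} {a : Coef n P Q} :
    a ∈ Ksub D x y ↔ (∀ q, q ∉ Q0 D x → a.2.1 q = 0) ∧ (∀ i, i ∉ Eact D y → a.2.2.1 i = 0) ∧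
    ((∑ i, y i) ≠ (n : ℝ) - D.s → a.2.2.2.1 = 0) ∧
    (∀ i, i ∉ a01 x y ∪ a00 x y → a.2.2.2.2.1 i = 0) ∧
    (∀ i, i ∉ a10 x y ∪ a00 x y → a.2.2.2.2.2 i = 0) := Iff.rfl

set_option synthInstance.maxHeartbeats 1000000 in
set_option maxHeartbeats 1000000 in
lemma phi_bound (D : Setting n P Q) (x y : Vec n) (hlicq : MPOC_LICQ D x y) :
    ∃ C : ℝ, 0 < C ∧ ∀ a ∈ Ksub D x y, ‖a‖ ≤ C * ‖Phi D x y a‖ := by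
  have hker : LinearMap.ker ((Phi D x y).comp (Ksub D x y).subtype) = ⊥ := by
    rw [LinearMap.ker_eq_bot']
    rintro ⟨a, ha⟩ hm
    obtain ⟨ha1, ha2, ha3, ha4, ha5⟩ := mem_Ksub.mp ha
    have hm' : Phi D x y a = 0 := hm
    simp only [Phi, LinearMap.coe_mk, AddHom.coe_mk] at hm'
    obtain ⟨c1, c2, c3, c4, c5, c6⟩ :=
      hlicq a.1 a.2.1 a.2.2.1 a.2.2.2.1 a.2.2.2.2.1 a.2.2.2.2.2 ha3 hm'
    apply Subtype.ext
    show a = 0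
    obtain ⟨l, m1, m2, m3, t1, t2⟩ := a
    simp only [Prod.mk_eq_zero]
    refine ⟨funext c1, funext fun q => ?_, funext fun i => ?_, c4,
      funext fun i => ?_, funext fun i => ?_⟩
    · by_cases hq : q ∈ Q0 D x
      · exact c2 q hq
      · exact ha1 q hq
    · by_cases hi : i ∈ Eact D y
      · exact c3 i hi
      · exact ha2 i hi
    · by_cases hi : i ∈ a01 x y ∪ a00 x y
      · exact c5 i hi
      · exact ha4 i hi
    · by_cases hi : i ∈ a10 x y ∪ a00 x y
      · exact c6 i hi
      · exact ha5 i hi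
  obtain ⟨K, hK, hant⟩ :=
    LinearMap.exists_antilipschitzWith ((Phi D x y).comp (Ksub D x y).subtype) hker
  refine ⟨K, by exact_mod_cast hK, fun a ha => ?_⟩
  have h := hant.le_mul_dist (⟨a, ha⟩ : Ksub D x y) 0
  simpa [dist_eq_norm] using h

end Statement4Aux

set_option maxHeartbeats 2000000 in
/-- Theorem 1: MPOC-LICQ at a feasible point of R implies LICQ at
all feasible points of S(t) close to it, for all sufficiently small t > 0. -/
theorem statement4 {n : ℕ} {P Q : Type*} [Fintype P] [Fintype Q]
    (D : Setting n P Q) (x y : Vec n)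
    (hfeas : feasR D x y) (hlicq : MPOC_LICQ D x y) :
    ∃ tbar > (0 : ℝ), ∃ δ > (0 : ℝ), ∀ t : ℝ, 0 < t → t < tbar →
      ∀ x' y' : Vec n, feasS D t x' y' →
        ‖((x', y') : Vec n × Vec n) - (x, y)‖ < δ → LICQ D t x' y' := by
  classical
  obtain ⟨hh0, hgge, hsumge, hxy0, hybnd⟩ := hfeas
  have hy0 : ∀ i, 0 ≤ y i := fun i => (hybnd i).1
  have hyub : ∀ i, y i ≤ 1 + D.ε := fun i => (hybnd i).2
  obtain ⟨C, hC, hbound⟩ := phi_bound D x y hlicq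
  set SC : ℝ := (Fintype.card P : ℝ) + (Fintype.card Q : ℝ) + (n : ℝ) + (n : ℝ) with hSCdef
  have hSC0 : 0 ≤ SC := by rw [hSCdef]; positivity
  set γ : ℝ := 1 / (2 * C * (SC + 1)) with hγdef
  have hγpos : 0 < γ := by
    rw [hγdef]
    exact one_div_pos.mpr (by nlinarith)
  -- minimum of the relevant positive quantities at the base point
  set S0 : Finset ℝ := insert 1 ((univ.image fun i : Fin n => if 0 < y i then y i else 1)
    ∪ (univ.image fun i : Fin n => if x i ≠ 0 then |x i| else 1)) with hS0def
  have hS0ne : S0.Nonempty := ⟨1, by simp [hS0def]⟩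
  have hS0pos : ∀ r ∈ S0, 0 < r := by
    intro r hr
    simp only [hS0def, Finset.mem_insert, Finset.mem_union, Finset.mem_image,
      Finset.mem_univ, true_and] at hr
    rcases hr with rfl | ⟨i, rfl⟩ | ⟨i, rfl⟩
    · norm_num
    · split_ifs with h
      exacts [h, one_pos]
    · split_ifs with h
      exacts [abs_pos.mpr h, one_pos]
  set m : ℝ := S0.min' hS0ne with hmdef
  have hmpos : 0 < m := hS0pos _ (S0.min'_mem hS0ne)
  have hmy : ∀ i, 0 < y i → m ≤ y i := by
    intro i hi
    have hmem : y i ∈ S0 := by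
      simp only [hS0def, Finset.mem_insert, Finset.mem_union, Finset.mem_image,
        Finset.mem_univ, true_and]
      exact Or.inr (Or.inl ⟨i, by rw [if_pos hi]⟩)
    exact S0.min'_le _ hmem
  have hmx : ∀ i, x i ≠ 0 → m ≤ |x i| := by
    intro i hi
    have hmem : |x i| ∈ S0 := by
      simp only [hS0def, Finset.mem_insert, Finset.mem_union, Finset.mem_image,
        Finset.mem_univ, true_and]
      exact Or.inr (Or.inr ⟨i, by rw [if_pos hi]⟩)
    exact S0.min'_le _ hmem
  -- eventual properties near (x, y)
  have evh : ∀ᶠ z : Vec n × Vec n in 𝓝 (x, y),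
      ∀ p, ‖grad (D.h p) z.1 - grad (D.h p) x‖ ≤ γ := by
    rw [Filter.eventually_all]
    intro p
    have hc : Continuous fun z : Vec n × Vec n => grad (D.h p) z.1 :=
      (grad_continuous (D.hh p)).comp continuous_fst
    have htd : Filter.Tendsto (fun z : Vec n × Vec n => grad (D.h p) z.1) (𝓝 (x, y))
        (𝓝 (grad (D.h p) x)) := hc.tendsto' _ _ rfl
    filter_upwards [htd (Metric.closedBall_mem_nhds (grad (D.h p) x) hγpos)] with z hz
    rw [Set.mem_preimage, Metric.mem_closedBall, dist_eq_norm] at hz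
    exact hz
  have evg : ∀ᶠ z : Vec n × Vec n in 𝓝 (x, y),
      ∀ q, ‖grad (D.g q) z.1 - grad (D.g q) x‖ ≤ γ := by
    rw [Filter.eventually_all]
    intro q
    have hc : Continuous fun z : Vec n × Vec n => grad (D.g q) z.1 :=
      (grad_continuous (D.hg q)).comp continuous_fst
    have htd : Filter.Tendsto (fun z : Vec n × Vec n => grad (D.g q) z.1) (𝓝 (x, y))
        (𝓝 (grad (D.g q) x)) := hc.tendsto' _ _ rfl
    filter_upwards [htd (Metric.closedBall_mem_nhds (grad (D.g q) x) hγpos)] with z hz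
    rw [Set.mem_preimage, Metric.mem_closedBall, dist_eq_norm] at hz
    exact hz
  have evgpos : ∀ᶠ z : Vec n × Vec n in 𝓝 (x, y), ∀ q, 0 < D.g q x → 0 < D.g q z.1 := by
    rw [Filter.eventually_all]
    intro q
    by_cases hq : 0 < D.g q x
    · have htd : Filter.Tendsto (fun z : Vec n × Vec n => D.g q z.1) (𝓝 (x, y))
          (𝓝 (D.g q x)) := (((D.hg q).continuous).comp continuous_fst).tendsto' _ _ rfl
      filter_upwards [htd.eventually_const_lt hq] with z hz _
      exact hz
    · filter_upwards with z h
      exact absurd h hq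
  have evylb : ∀ᶠ z : Vec n × Vec n in 𝓝 (x, y), ∀ i, 0 < y i → y i / 2 < z.2 i := by
    rw [Filter.eventually_all]
    intro i
    by_cases hi : 0 < y i
    · have htd : Filter.Tendsto (fun z : Vec n × Vec n => z.2 i) (𝓝 (x, y)) (𝓝 (y i)) :=
        ((continuous_apply i).comp continuous_snd).tendsto' _ _ rfl
      filter_upwards [htd.eventually_const_lt (by linarith : y i / 2 < y i)] with z hz _
      exact hz
    · filter_upwards with z h
      exact absurd h hi
  have evyub : ∀ᶠ z : Vec n × Vec n in 𝓝 (x, y), ∀ i, y i < 1 + D.ε → z.2 i < 1 + D.ε := by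
    rw [Filter.eventually_all]
    intro i
    by_cases hi : y i < 1 + D.ε
    · have htd : Filter.Tendsto (fun z : Vec n × Vec n => z.2 i) (𝓝 (x, y)) (𝓝 (y i)) :=
        ((continuous_apply i).comp continuous_snd).tendsto' _ _ rfl
      filter_upwards [htd.eventually_lt_const hi] with z hz _
      exact hz
    · filter_upwards with z h
      exact absurd h hi
  have evxlb : ∀ᶠ z : Vec n × Vec n in 𝓝 (x, y), ∀ i, x i ≠ 0 → |x i| / 2 < |z.1 i| := by
    rw [Filter.eventually_all]
    intro i
    by_cases hi : x i ≠ 0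
    · have htd : Filter.Tendsto (fun z : Vec n × Vec n => |z.1 i|) (𝓝 (x, y)) (𝓝 |x i|) :=
        (continuous_abs.comp ((continuous_apply i).comp continuous_fst)).tendsto' _ _ rfl
      have habs : |x i| / 2 < |x i| := by
        have := abs_pos.mpr hi
        linarith
      filter_upwards [htd.eventually_const_lt habs] with z hz _
      exact hz
    · filter_upwards with z h
      exact absurd h hi
  have evsum : ∀ᶠ z : Vec n × Vec n in 𝓝 (x, y),
      ((n : ℝ) - D.s < ∑ i, y i → (n : ℝ) - D.s < ∑ i, z.2 i) := by
    by_cases hgt : (n : ℝ) - D.s < ∑ i, y i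
    · have hc : Continuous fun z : Vec n × Vec n => ∑ i, z.2 i :=
        continuous_finset_sum _ fun i _ => (continuous_apply i).comp continuous_snd
      have htd : Filter.Tendsto (fun z : Vec n × Vec n => ∑ i, z.2 i) (𝓝 (x, y))
          (𝓝 (∑ i, y i)) := hc.tendsto' _ _ rfl
      filter_upwards [htd.eventually_const_lt hgt] with z hz _
      exact hz
    · filter_upwards with z h
      exact absurd h hgt
  have hev := (evh.and evg).and ((evgpos.and evylb).and ((evyub.and evxlb).and evsum))
  rw [Metric.eventually_nhds_iff] at hev
  obtain ⟨δ, hδpos, hδ⟩ := hev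
  refine ⟨γ * (m * m) / 4, div_pos (mul_pos hγpos (mul_pos hmpos hmpos)) (by norm_num),
    δ, hδpos, ?_⟩
  intro t ht htb x' y' hfeasS hnear
  have hz := hδ (show dist ((x', y') : Vec n × Vec n) (x, y) < δ by rwa [dist_eq_norm])
  obtain ⟨⟨pgh, pgg⟩, ⟨pgpos, pylb⟩, ⟨pyub, pxlb⟩, psum⟩ := hz
  dsimp only at pgh pgg pgpos pylb pyub pxlb psum
  -- index set facts
  have hmemH : ∀ i : Fin n, i ∈ Hact t x' y' ↔ (x' i * y' i = -t ∨ x' i * y' i = t) := by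
    intro i
    simp [Hact, Hge, Hle, Finset.mem_union, Finset.mem_filter]
  have hHfact : ∀ i ∈ Hact t x' y', x' i ≠ 0 ∧ y' i ≠ 0 ∧ |x' i| * |y' i| = t := by
    intro i hi
    have habs : |x' i * y' i| = t := by
      rcases (hmemH i).1 hi with h | h <;> rw [h]
      · rw [abs_neg, abs_of_pos ht]
      · exact abs_of_pos ht
    rw [abs_mul] at habs
    refine ⟨?_, ?_, habs⟩
    · intro h
      rw [h] at habs
      simp at habs
      exact ht.ne' habs.symm
    · intro h
      rw [h] at habs
      simp at habs
      exact ht.ne' habs.symm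
  have hHN : ∀ i ∈ Hact t x' y', i ∉ Nact y' := by
    intro i hi hN
    simp only [Nact, Finset.mem_filter, Finset.mem_univ, true_and] at hN
    exact (hHfact i hi).2.1 hN
  have hNy : ∀ i ∈ Nact y', y i = 0 := by
    intro i hi
    simp only [Nact, Finset.mem_filter, Finset.mem_univ, true_and] at hi
    by_contra hne
    have hpos : 0 < y i := lt_of_le_of_ne (hy0 i) (Ne.symm hne)
    have := pylb i hpos
    rw [hi] at this
    linarith
  have hQsub : Q0 D x' ⊆ Q0 D x := by
    intro q hq
    simp only [Q0, Finset.mem_filter, Finset.mem_univ, true_and] at hq ⊢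
    by_contra hne
    have hpos : 0 < D.g q x := lt_of_le_of_ne (hgge q) (Ne.symm hne)
    have := pgpos q hpos
    rw [hq] at this
    exact lt_irrefl 0 this
  have hEsub : Eact D y' ⊆ Eact D y := by
    intro i hi
    simp only [Eact, Finset.mem_filter, Finset.mem_univ, true_and] at hi ⊢
    by_contra hne
    have hlt : y i < 1 + D.ε := lt_of_le_of_ne (hyub i) hne
    have := pyub i hlt
    rw [hi] at this
    exact lt_irrefl _ this
  -- the LICQ goal
  intro lam mu1 mu2 mu3 eta nu hmu3 hsum
  set mu1' : Q → ℝ := fun q => if q ∈ Q0 D x' then mu1 q else 0 with hmu1'def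
  set mu2' : Fin n → ℝ := fun i => if i ∈ Eact D y' then mu2 i else 0 with hmu2'def
  set s1 : Fin n → ℝ := fun i => if i ∈ Hact t x' y' ∧ x i = 0 then eta i * y' i else 0
    with hs1def
  set s2 : Fin n → ℝ := fun i => (if i ∈ Hact t x' y' ∧ y i = 0 then eta i * x' i else 0)
    + (if i ∈ Nact y' then nu i else 0) with hs2def
  set a : Coef n P Q := (lam, mu1', mu2', mu3, s1, s2) with hadef
  have hamem : a ∈ Ksub D x y := by
    rw [hadef]
    refine mem_Ksub.mpr ⟨fun q hq => ?_, fun i hi => ?_, fun hne => ?_,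
      fun i hi => ?_, fun i hi => ?_⟩
    · show mu1' q = 0
      simp only [hmu1'def]
      exact if_neg fun hq' => hq (hQsub hq')
    · show mu2' i = 0
      simp only [hmu2'def]
      exact if_neg fun hi' => hi (hEsub hi')
    · show mu3 = 0
      have hgt : (n : ℝ) - D.s < ∑ i, y i := lt_of_le_of_ne hsumge (Ne.symm hne)
      have hgt' := psum hgt
      exact hmu3 fun h => by rw [h] at hgt'; exact lt_irrefl _ hgt'
    · show s1 i = 0
      rw [a01_union_a00 x y hy0] at hi
      simp only [Finset.mem_filter, Finset.mem_univ, true_and] at hi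
      simp only [hs1def]
      exact if_neg fun h => hi h.2
    · show s2 i = 0
      rw [a10_union_a00 x y] at hi
      simp only [Finset.mem_filter, Finset.mem_univ, true_and] at hi
      simp only [hs2def]
      rw [if_neg fun h : _ ∧ y i = 0 => hi h.2, if_neg fun h => hi (hNy i h), add_zero]
  have hPhi : Phi D x y a =
      (∑ p, lam p • ((grad (D.h p) x, (0 : Vec n)) : Vec n × Vec n))
      + (∑ q ∈ Q0 D x, mu1' q • ((grad (D.g q) x, (0 : Vec n)) : Vec n × Vec n))
      + (∑ i ∈ Eact D y, mu2' i • ey i)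
      + mu3 • eAll
      + (∑ i ∈ a01 x y ∪ a00 x y, s1 i • ex i)
      + (∑ i ∈ a10 x y ∪ a00 x y, s2 i • ey i) := by
    rw [hadef]; rfl
  set Err : Vec n × Vec n :=
      (∑ p, lam p • ((grad (D.h p) x' - grad (D.h p) x, (0 : Vec n)) : Vec n × Vec n))
      + (∑ q ∈ Q0 D x', mu1 q • ((grad (D.g q) x' - grad (D.g q) x, (0 : Vec n)) : Vec n × Vec n))
      + (∑ i : Fin n, if i ∈ Hact t x' y' ∧ x i = 0 ∧ 0 < y i then (eta i * x' i) • ey i else 0)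
      + (∑ i : Fin n, if i ∈ Hact t x' y' ∧ x i ≠ 0 then (eta i * y' i) • ex i else 0)
      with hErrdef
  -- block identities
  have e1 : (∑ p, lam p • ((grad (D.h p) x, (0 : Vec n)) : Vec n × Vec n))
      + (∑ p, lam p • ((grad (D.h p) x' - grad (D.h p) x, (0 : Vec n)) : Vec n × Vec n))
      = ∑ p, lam p • ((grad (D.h p) x', (0 : Vec n)) : Vec n × Vec n) := by
    rw [← Finset.sum_add_distrib]
    exact Finset.sum_congr rfl fun p _ => pairadd _ _ _
  have e2 : (∑ q ∈ Q0 D x, mu1' q • ((grad (D.g q) x, (0 : Vec n)) : Vec n × Vec n))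
      + (∑ q ∈ Q0 D x', mu1 q • ((grad (D.g q) x' - grad (D.g q) x, (0 : Vec n)) : Vec n × Vec n))
      = ∑ q ∈ Q0 D x', mu1 q • ((grad (D.g q) x', (0 : Vec n)) : Vec n × Vec n) := by
    have hz1 : ∀ q ∈ Q0 D x, q ∉ Q0 D x' →
        mu1' q • ((grad (D.g q) x, (0 : Vec n)) : Vec n × Vec n) = 0 := by
      intro q _ hq
      simp only [hmu1'def]
      rw [if_neg hq, zero_smul]
    rw [← Finset.sum_subset hQsub hz1]
    have hc : (∑ q ∈ Q0 D x', mu1' q • ((grad (D.g q) x, (0 : Vec n)) : Vec n × Vec n))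
        = ∑ q ∈ Q0 D x', mu1 q • ((grad (D.g q) x, (0 : Vec n)) : Vec n × Vec n) :=
      Finset.sum_congr rfl fun q hq => by simp only [hmu1'def]; rw [if_pos hq]
    rw [hc, ← Finset.sum_add_distrib]
    exact Finset.sum_congr rfl fun q _ => pairadd _ _ _
  have e3 : (∑ i ∈ Eact D y, mu2' i • ey i) = ∑ i ∈ Eact D y', mu2 i • ey i := by
    have hz1 : ∀ i ∈ Eact D y, i ∉ Eact D y' → mu2' i • ey i = 0 := by
      intro i _ hi
      simp only [hmu2'def]
      rw [if_neg hi, zero_smul]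
    rw [← Finset.sum_subset hEsub hz1]
    exact Finset.sum_congr rfl fun i hi => by simp only [hmu2'def]; rw [if_pos hi]
  have e5 : (∑ i ∈ a01 x y ∪ a00 x y, s1 i • ex i) + (∑ i ∈ a10 x y ∪ a00 x y, s2 i • ey i)
      + (∑ i : Fin n, if i ∈ Hact t x' y' ∧ x i = 0 ∧ 0 < y i then (eta i * x' i) • ey i else 0)
      + (∑ i : Fin n, if i ∈ Hact t x' y' ∧ x i ≠ 0 then (eta i * y' i) • ex i else 0)
      = (∑ i ∈ Hact t x' y', eta i • hvec x' y' i) + (∑ i ∈ Nact y', nu i • ey i) := by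
    have hH' : (∑ i ∈ Hact t x' y', eta i • hvec x' y' i)
        = ∑ i : Fin n, (if i ∈ Hact t x' y' then eta i • hvec x' y' i else 0) := by
      rw [Finset.sum_ite_mem, Finset.univ_inter]
    have hN' : (∑ i ∈ Nact y', nu i • ey i)
        = ∑ i : Fin n, (if i ∈ Nact y' then nu i • ey i else 0) := by
      rw [Finset.sum_ite_mem, Finset.univ_inter]
    rw [a01_union_a00 x y hy0, a10_union_a00 x y, Finset.sum_filter, Finset.sum_filter,
      hH', hN', ← Finset.sum_add_distrib, ← Finset.sum_add_distrib, ← Finset.sum_add_distrib,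
      ← Finset.sum_add_distrib]
    refine Finset.sum_congr rfl fun i _ => ?_
    by_cases hiH : i ∈ Hact t x' y'
    · have hiN : i ∉ Nact y' := hHN i hiH
      by_cases hx0 : x i = 0
      · by_cases hy0i : y i = 0
        · simp [hs1def, hs2def, hiH, hiN, hx0, hy0i, hvec_eq, smul_add, smul_smul]
        · have hypos : 0 < y i := lt_of_le_of_ne (hy0 i) (Ne.symm hy0i)
          simp [hs1def, hs2def, hiH, hiN, hx0, hy0i, hypos, hvec_eq, smul_add, smul_smul]
      · have hyi0 : y i = 0 := (mul_eq_zero.mp (hxy0 i)).resolve_left hx0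
        simp only [hs1def, hs2def, hvec_eq, smul_add, smul_smul]
        rw [if_neg (fun h : _ ∧ x i = 0 => hx0 h.2), if_pos hyi0,
          if_pos (And.intro hiH hyi0), if_neg hiN, add_zero,
          if_neg (fun h : _ ∧ x i = 0 ∧ 0 < y i => hx0 h.2.1),
          if_pos (And.intro hiH hx0), if_pos hiH, if_neg hiN, add_zero, add_zero,
          if_neg hx0, zero_add]
        abel
    · by_cases hiN : i ∈ Nact y'
      · have hyN := hNy i hiN
        simp [hs1def, hs2def, hiH, hiN, hyN]
      · simp [hs1def, hs2def, hiH, hiN]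
  have key : Phi D x y a + Err
      = (∑ p, lam p • ((grad (D.h p) x', (0 : Vec n)) : Vec n × Vec n))
        + (∑ q ∈ Q0 D x', mu1 q • ((grad (D.g q) x', (0 : Vec n)) : Vec n × Vec n))
        + (∑ i ∈ Eact D y', mu2 i • ey i)
        + mu3 • eAll
        + (∑ i ∈ Hact t x' y', eta i • hvec x' y' i)
        + (∑ i ∈ Nact y', nu i • ey i) := by
    rw [hPhi, hErrdef]
    have hre : ∀ u1 u2 u3 u4 u5 u6 v1 v2 v3 v4 : Vec n × Vec n,
        (u1 + u2 + u3 + u4 + u5 + u6) + (v1 + v2 + v3 + v4)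
          = (u1 + v1) + ((u2 + v2) + (u3 + (u4 + (u5 + u6 + v3 + v4)))) := by
      intros
      abel
    rw [hre, e1, e2, e3, e5]
    abel
  have hPhiErr : Phi D x y a = -Err := by
    have h0 : Phi D x y a + Err = 0 := by rw [key]; exact hsum
    exact eq_neg_of_add_eq_zero_left h0
  -- norm bounds
  have hcb := coef_bounds lam mu1' mu2' mu3 s1 s2
  rw [← hadef] at hcb
  obtain ⟨cb1, cb2, cb3, cb4, cb5, cb6⟩ := hcb
  have hbound3 : ∀ i, i ∈ Hact t x' y' → x i = 0 → 0 < y i → |eta i * x' i| ≤ γ * ‖a‖ := by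
    intro i hiH hx0 hyp
    obtain ⟨hxne, hyne, habs⟩ := hHfact i hiH
    have hy'big : m / 2 < y' i := by
      have h1 := hmy i hyp
      have h2 := pylb i hyp
      linarith
    have hy'pos : 0 < y' i := by linarith
    have hs1v : s1 i = eta i * y' i := by
      simp only [hs1def]
      exact if_pos ⟨hiH, hx0⟩
    have hs1le : |eta i * y' i| ≤ ‖a‖ := hs1v ▸ cb5 i
    have hid : |eta i * x' i| * (y' i * y' i) = |eta i * y' i| * t := by
      rw [abs_mul, abs_mul, ← habs, abs_of_pos hy'pos]
      ring
    have h1 : |eta i * y' i| * t ≤ ‖a‖ * (γ * (m * m) / 4) :=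
      mul_le_mul hs1le (le_of_lt htb) (le_of_lt ht) (norm_nonneg a)
    have hsq : (m / 2) * (m / 2) ≤ y' i * y' i :=
      mul_le_mul hy'big.le hy'big.le (by linarith) hy'pos.le
    have h2 : γ * (m * m) / 4 ≤ γ * (y' i * y' i) := by
      have hmono : γ * ((m / 2) * (m / 2)) ≤ γ * (y' i * y' i) :=
        mul_le_mul_of_nonneg_left hsq hγpos.le
      calc γ * (m * m) / 4 = γ * ((m / 2) * (m / 2)) := by ring
        _ ≤ γ * (y' i * y' i) := hmono
    have h4 : |eta i * x' i| * (y' i * y' i) ≤ (γ * ‖a‖) * (y' i * y' i) := by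
      rw [hid]
      calc |eta i * y' i| * t ≤ ‖a‖ * (γ * (m * m) / 4) := h1
        _ ≤ ‖a‖ * (γ * (y' i * y' i)) := mul_le_mul_of_nonneg_left h2 (norm_nonneg a)
        _ = (γ * ‖a‖) * (y' i * y' i) := by ring
    exact le_of_mul_le_mul_right h4 (mul_pos hy'pos hy'pos)
  have hbound4 : ∀ i, i ∈ Hact t x' y' → x i ≠ 0 → |eta i * y' i| ≤ γ * ‖a‖ := by
    intro i hiH hxne0
    obtain ⟨hxne, hyne, habs⟩ := hHfact i hiH
    have hyi0 : y i = 0 := (mul_eq_zero.mp (hxy0 i)).resolve_left hxne0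
    have hx'big : m / 2 < |x' i| := by
      have h1 := hmx i hxne0
      have h2 := pxlb i hxne0
      linarith
    have hx'pos : 0 < |x' i| := by linarith
    have hs2v : s2 i = eta i * x' i := by
      simp only [hs2def]
      rw [if_pos ⟨hiH, hyi0⟩, if_neg (hHN i hiH), add_zero]
    have hs2le : |eta i * x' i| ≤ ‖a‖ := hs2v ▸ cb6 i
    have hid : |eta i * y' i| * (|x' i| * |x' i|) = |eta i * x' i| * t := by
      rw [abs_mul, abs_mul, ← habs]
      ring
    have h1 : |eta i * x' i| * t ≤ ‖a‖ * (γ * (m * m) / 4) :=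
      mul_le_mul hs2le (le_of_lt htb) (le_of_lt ht) (norm_nonneg a)
    have hsq : (m / 2) * (m / 2) ≤ |x' i| * |x' i| :=
      mul_le_mul hx'big.le hx'big.le (by linarith) hx'pos.le
    have h2 : γ * (m * m) / 4 ≤ γ * (|x' i| * |x' i|) := by
      have hmono : γ * ((m / 2) * (m / 2)) ≤ γ * (|x' i| * |x' i|) :=
        mul_le_mul_of_nonneg_left hsq hγpos.le
      calc γ * (m * m) / 4 = γ * ((m / 2) * (m / 2)) := by ring
        _ ≤ γ * (|x' i| * |x' i|) := hmono
    have h4 : |eta i * y' i| * (|x' i| * |x' i|) ≤ (γ * ‖a‖) * (|x' i| * |x' i|) := by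
      rw [hid]
      calc |eta i * x' i| * t ≤ ‖a‖ * (γ * (m * m) / 4) := h1
        _ ≤ ‖a‖ * (γ * (|x' i| * |x' i|)) := mul_le_mul_of_nonneg_left h2 (norm_nonneg a)
        _ = (γ * ‖a‖) * (|x' i| * |x' i|) := by ring
    exact le_of_mul_le_mul_right h4 (mul_pos hx'pos hx'pos)
  have hga : (0 : ℝ) ≤ γ * ‖a‖ := mul_nonneg hγpos.le (norm_nonneg a)
  have hEB1 : ‖∑ p, lam p • ((grad (D.h p) x' - grad (D.h p) x, (0 : Vec n)) : Vec n × Vec n)‖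
      ≤ (Fintype.card P : ℝ) * (γ * ‖a‖) := by
    refine (norm_sum_le _ _).trans ?_
    have hterm : ∀ p ∈ (univ : Finset P),
        ‖lam p • ((grad (D.h p) x' - grad (D.h p) x, (0 : Vec n)) : Vec n × Vec n)‖
          ≤ γ * ‖a‖ := by
      intro p _
      rw [norm_smul, Real.norm_eq_abs, pair_norm_left]
      calc |lam p| * ‖grad (D.h p) x' - grad (D.h p) x‖ ≤ ‖a‖ * γ :=
            mul_le_mul (cb1 p) (pgh p) (norm_nonneg _) (norm_nonneg a)
        _ = γ * ‖a‖ := mul_comm _ _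
    refine (Finset.sum_le_card_nsmul _ _ _ hterm).trans ?_
    rw [nsmul_eq_mul, Finset.card_univ]
  have hEB2 : ‖∑ q ∈ Q0 D x',
        mu1 q • ((grad (D.g q) x' - grad (D.g q) x, (0 : Vec n)) : Vec n × Vec n)‖
      ≤ (Fintype.card Q : ℝ) * (γ * ‖a‖) := by
    refine (norm_sum_le _ _).trans ?_
    have hterm : ∀ q ∈ Q0 D x',
        ‖mu1 q • ((grad (D.g q) x' - grad (D.g q) x, (0 : Vec n)) : Vec n × Vec n)‖
          ≤ γ * ‖a‖ := by
      intro q hq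
      rw [norm_smul, Real.norm_eq_abs, pair_norm_left]
      have hmq : |mu1 q| ≤ ‖a‖ := by
        have hv : mu1' q = mu1 q := by simp only [hmu1'def]; exact if_pos hq
        exact hv ▸ cb2 q
      calc |mu1 q| * ‖grad (D.g q) x' - grad (D.g q) x‖ ≤ ‖a‖ * γ :=
            mul_le_mul hmq (pgg q) (norm_nonneg _) (norm_nonneg a)
        _ = γ * ‖a‖ := mul_comm _ _
    refine (Finset.sum_le_card_nsmul _ _ _ hterm).trans ?_
    rw [nsmul_eq_mul]
    refine mul_le_mul_of_nonneg_right ?_ hga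
    exact_mod_cast (Finset.card_le_univ _).trans_eq Finset.card_univ
  have hEB3 : ‖∑ i : Fin n,
        if i ∈ Hact t x' y' ∧ x i = 0 ∧ 0 < y i then (eta i * x' i) • ey i else 0‖
      ≤ (n : ℝ) * (γ * ‖a‖) := by
    refine (norm_sum_le _ _).trans ?_
    have hterm : ∀ i ∈ (univ : Finset (Fin n)),
        ‖if i ∈ Hact t x' y' ∧ x i = 0 ∧ 0 < y i then (eta i * x' i) • ey i else 0‖
          ≤ γ * ‖a‖ := by
      intro i _
      split_ifs with h
      · rw [norm_smul, Real.norm_eq_abs, ey_norm, mul_one]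
        exact hbound3 i h.1 h.2.1 h.2.2
      · rw [norm_zero]
        exact hga
    refine (Finset.sum_le_card_nsmul _ _ _ hterm).trans ?_
    rw [nsmul_eq_mul, Finset.card_univ, Fintype.card_fin]
  have hEB4 : ‖∑ i : Fin n,
        if i ∈ Hact t x' y' ∧ x i ≠ 0 then (eta i * y' i) • ex i else 0‖
      ≤ (n : ℝ) * (γ * ‖a‖) := by
    refine (norm_sum_le _ _).trans ?_
    have hterm : ∀ i ∈ (univ : Finset (Fin n)),
        ‖if i ∈ Hact t x' y' ∧ x i ≠ 0 then (eta i * y' i) • ex i else 0‖ ≤ γ * ‖a‖ := by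
      intro i _
      split_ifs with h
      · rw [norm_smul, Real.norm_eq_abs, ex_norm, mul_one]
        exact hbound4 i h.1 h.2
      · rw [norm_zero]
        exact hga
    refine (Finset.sum_le_card_nsmul _ _ _ hterm).trans ?_
    rw [nsmul_eq_mul, Finset.card_univ, Fintype.card_fin]
  have hErrB : ‖Err‖ ≤ SC * (γ * ‖a‖) := by
    rw [hErrdef]
    refine le_trans (norm_add_le _ _) ?_
    refine le_trans (add_le_add (norm_add_le _ _) le_rfl) ?_
    refine le_trans (add_le_add (add_le_add (norm_add_le _ _) le_rfl) le_rfl) ?_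
    have hexp : SC * (γ * ‖a‖) = (Fintype.card P : ℝ) * (γ * ‖a‖)
        + (Fintype.card Q : ℝ) * (γ * ‖a‖) + (n : ℝ) * (γ * ‖a‖) + (n : ℝ) * (γ * ‖a‖) := by
      rw [hSCdef]; ring
    rw [hexp]
    exact add_le_add (add_le_add (add_le_add hEB1 hEB2) hEB3) hEB4
  -- conclude a = 0
  have hfin : ‖a‖ ≤ C * (SC * (γ * ‖a‖)) := by
    calc ‖a‖ ≤ C * ‖Phi D x y a‖ := hbound a hamem
      _ = C * ‖Err‖ := by rw [hPhiErr, norm_neg]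
      _ ≤ C * (SC * (γ * ‖a‖)) := mul_le_mul_of_nonneg_left hErrB (le_of_lt hC)
  have hhalf : C * (SC * γ) ≤ 1 / 2 := by
    have hq : C * (SC * γ) = SC / (2 * (SC + 1)) := by
      rw [hγdef]
      field_simp
    rw [hq, div_le_iff₀ (by nlinarith)]
    linarith
  have ha0 : a = 0 := by
    rw [← norm_le_zero_iff]
    have hfe : C * (SC * (γ * ‖a‖)) = (C * (SC * γ)) * ‖a‖ := by ring
    rw [hfe] at hfin
    have h5 := mul_le_mul_of_nonneg_right hhalf (norm_nonneg a)
    have hfin2 : ‖a‖ ≤ 1 / 2 * ‖a‖ := hfin.trans h5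
    linarith [hfin2]
  rw [hadef] at ha0
  rw [Prod.mk_eq_zero, Prod.mk_eq_zero, Prod.mk_eq_zero, Prod.mk_eq_zero,
    Prod.mk_eq_zero] at ha0
  obtain ⟨hl0, hm10, hm20, hm30, hs10, hs20⟩ := ha0
  refine ⟨fun p => congrFun hl0 p, fun q hq => ?_, fun i hi => ?_, hm30,
    fun i hi => ?_, fun i hi => ?_⟩
  · have h := congrFun hm10 q
    simp only [hmu1'def, Pi.zero_apply] at h
    rwa [if_pos hq] at h
  · have h := congrFun hm20 i
    simp only [hmu2'def, Pi.zero_apply] at h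
    rwa [if_pos hi] at h
  · obtain ⟨hxne, hyne, _⟩ := hHfact i hi
    by_cases hx0 : x i = 0
    · have h := congrFun hs10 i
      simp only [hs1def, Pi.zero_apply] at h
      rw [if_pos ⟨hi, hx0⟩] at h
      exact (mul_eq_zero.mp h).resolve_right hyne
    · have hyi0 : y i = 0 := (mul_eq_zero.mp (hxy0 i)).resolve_left hx0
      have h := congrFun hs20 i
      simp only [hs2def, Pi.zero_apply] at h
      rw [if_pos ⟨hi, hyi0⟩, if_neg (hHN i hi), add_zero] at h
      exact (mul_eq_zero.mp h).resolve_right hxne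
  · have hiH : i ∉ Hact t x' y' := fun hH => hHN i hH hi
    have h := congrFun hs20 i
    simp only [hs2def, Pi.zero_apply] at h
    rw [if_neg (fun hc : _ ∧ _ => hiH hc.1), if_pos hi, zero_add] at h
    exact h

end Scholtes
end
end

section
/- Let (x,y) be a Karush–Kuhn–Tucker point of the Scholtes-type regularization S(t) for some t > 0. Then the summation inequality constraint is active at (x,y), i.e. ∑_{i=1}^n y_i = n−s. -/
open scoped Classical
open Finset Filter Topology

noncomputable section
namespace Scholtes

variable {n : ℕ} {P Q : Type*} [Fintype P] [Fintype Q]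

/-- Lemma 2a: at any KKT point of S(t) the summation inequality
constraint is active. -/
theorem statement5 {n : ℕ} {P Q : Type*} [Fintype P] [Fintype Q]
    (D : Setting n P Q) (t : ℝ) (ht : 0 < t) (x y : Vec n)
    (hK : KKT D t x y) :
    (∑ i, y i) = (n : ℝ) - D.s := by
  obtain ⟨M, hfeas, hmu1, hmu2, hmu3nn, hcomp, hGe, hLe, hNu, hEq⟩ := hK
  by_contra hne
  have hsum : (n : ℝ) - D.s ≤ ∑ i, y i := hfeas.2.2.1
  have hmu3 : M.mu3 = 0 := by
    rcases mul_eq_zero.mp hcomp with h | h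
    · exact h
    · exact absurd (by linarith [sub_eq_zero.mp h]) hne
  have hpos : ∃ i, 0 < y i := by
    by_contra hall
    push_neg at hall
    have hz : ∑ i, y i = 0 :=
      Finset.sum_eq_zero fun i _ => le_antisymm (hall i) (hfeas.2.2.2.2 i).1
    have hsn : (D.s : ℝ) < n := by exact_mod_cast D.hs
    rw [hz] at hsum
    linarith
  obtain ⟨i, hyi⟩ := hpos
  have h2 := congrFun (congrArg Prod.snd hEq) i
  simp only [KKTEq, ex, ey, eAll, hvec, Prod.snd_sum, Prod.snd_add, Prod.snd_sub,
    Prod.smul_snd, Prod.mk.injEq, Finset.sum_apply, Pi.add_apply, Pi.sub_apply,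
    Pi.smul_apply, smul_eq_mul, Pi.single_apply, mul_zero, Finset.sum_const_zero,
    Finset.sum_ite_eq', mul_ite, mul_one, Pi.zero_apply, zero_add, add_zero,
    Pi.one_apply, hmu3, zero_mul] at h2
  simp only [Finset.sum_ite_eq] at h2
  have hN : i ∉ Nact y := by
    simp only [Nact, Finset.mem_filter, Finset.mem_univ, true_and]
    linarith
  rw [if_neg hN] at h2
  have hEterm : (0:ℝ) ≤ if i ∈ Eact D y then M.mu2 i else 0 := by
    split
    · next hE => exact hmu2 i hE
    · exact le_refl 0
  have hGterm : (if i ∈ Hge t x y then M.etaGe i * x i else 0) ≤ 0 := by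
    split
    · next hG =>
      have hxy : x i * y i = -t := by
        simpa [Hge] using hG
      have hx : x i < 0 := by nlinarith
      exact mul_nonpos_iff.mpr (Or.inl ⟨hGe i hG, hx.le⟩)
    · exact le_refl 0
  have hLterm : (0:ℝ) ≤ if i ∈ Hle t x y then M.etaLe i * x i else 0 := by
    split
    · next hL =>
      have hxy : x i * y i = t := by
        simpa [Hle] using hL
      have hx : 0 < x i := by nlinarith
      exact mul_nonneg (hLe i hL) hx.le
    · exact le_refl 0
  have hc := D.hcpos i
  linarith


end Scholtes
end
end

section
/- Let (x,y) be a Karush–Kuhn–Tucker point of the Scholtes-type regularization S(t) for some t > 0, with multipliers (λ,μ,η,ν). Then the multiplier of the summation constraint is strictly positive: μ_3 > 0. -/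
open scoped Classical
open Finset Filter Topology

noncomputable section
namespace Scholtes

variable {n : ℕ} {P Q : Type*} [Fintype P] [Fintype Q]

/-- for any multipliers of a KKT point of S(t), μ₃ > 0. -/
theorem statement6 {n : ℕ} {P Q : Type*} [Fintype P] [Fintype Q]
    (D : Setting n P Q) (t : ℝ) (ht : 0 < t) (x y : Vec n) (M : SMult n P Q)
    (hK : KKTAt D t x y M) :
    0 < M.mu3 := by
  obtain ⟨hfeas, hmu1, hmu2, hmu3, hcomp, hge, hle, hnu, hEq⟩ := hK
  obtain ⟨hhp, hgq, hsum, hxy, hb⟩ := hfeas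
  have hns : (1:ℝ) ≤ (n:ℝ) - D.s := by
    have := D.hs
    have : (D.s : ℝ) + 1 ≤ (n : ℝ) := by exact_mod_cast this
    linarith
  obtain ⟨i, hyi⟩ : ∃ i, 0 < y i := by
    by_contra h
    push_neg at h
    have hz : ∀ i, y i = 0 := fun i => le_antisymm (h i) (hb i).1
    simp [hz] at hsum
    exact absurd hsum (not_le.mpr D.hs)
  have h2 := congrFun (congrArg Prod.snd hEq) i
  simp [ey, eAll, hvec, Prod.snd_sum, Finset.sum_apply, Pi.single_apply,
    mul_ite, Finset.sum_ite_eq'] at h2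
  have hNi : i ∉ Nact y := by
    simp only [Nact, mem_filter, mem_univ, true_and]
    exact ne_of_gt hyi
  rw [if_neg hNi, add_zero] at h2
  have hE : (0:ℝ) ≤ (if i ∈ Eact D y then M.mu2 i else 0) := by
    split_ifs with h
    · exact hmu2 i h
    · exact le_refl 0
  have hG : (if i ∈ Hge t x y then M.etaGe i * x i else 0) ≤ 0 := by
    split_ifs with h
    · have hx : x i * y i = -t := by
        simpa [Hge] using h
      have hxneg : x i < 0 := by nlinarith
      exact mul_nonpos_of_nonneg_of_nonpos (hge i h) (le_of_lt hxneg)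
    · exact le_refl 0
  have hL : (0:ℝ) ≤ (if i ∈ Hle t x y then M.etaLe i * x i else 0) := by
    split_ifs with h
    · have hx : x i * y i = t := by
        simpa [Hle] using h
      have hxpos : 0 < x i := by nlinarith
      exact mul_nonneg (hle i h) (le_of_lt hxpos)
    · exact le_refl 0
  have hc := D.hcpos i
  linarith


end Scholtes
end
end

section
/- Let (x,y) be a Karush–Kuhn–Tucker point of the Scholtes-type regularization S(t) for some t > 0. Then the index set E(y) ∪ H(x,y) consists of at least n−s−1 elements, the index set N(y) consists of at most s elements, and at most one index belongs to none of these sets, i.e. |O(x,y)| ≤ 1. -/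
open scoped Classical
open Finset Filter Topology

noncomputable section
namespace Scholtes

variable {n : ℕ} {P Q : Type*} [Fintype P] [Fintype Q]

/-- Lemma 2b: at a KKT point of S(t), |E(y) ∪ H(x,y)| ≥ n−s−1,
|N(y)| ≤ s and |O(x,y)| ≤ 1. -/
theorem statement7 {n : ℕ} {P Q : Type*} [Fintype P] [Fintype Q]
    (D : Setting n P Q) (t : ℝ) (ht : 0 < t) (x y : Vec n)
    (hK : KKT D t x y) :
    n - D.s - 1 ≤ (Eact D y ∪ Hact t x y).card ∧
    (Nact y).card ≤ D.s ∧
    (Oact D t x y).card ≤ 1 := by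
  obtain ⟨M, hfeas, _, _, _, _, _, _, _, heq⟩ := hK
  obtain ⟨hh, hg, hsum, hxy, hy⟩ := hfeas
  have hns : (0:ℝ) < (n:ℝ) - D.s := by
    have := D.hs
    have : (D.s : ℝ) < (n : ℝ) := by exact_mod_cast this
    linarith
  have hεmul : ((n:ℝ) - D.s) * D.ε ≤ 1 := by
    have := D.hεle
    rw [le_div_iff₀ hns] at this
    linarith [this]
  -- Part 2: |N| ≤ s
  have hNcard : (Nact y).card ≤ D.s := by
    by_contra hcon
    push_neg at hcon
    have hNn : (Nact y).card ≤ n := by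
      simpa using Finset.card_le_card (Finset.subset_univ (Nact y))
    have hsum2 : ∑ i, y i ≤ ((n:ℝ) - (Nact y).card) * (1 + D.ε) := by
      have h0 : ∑ i, y i = ∑ i ∈ (Nact y)ᶜ, y i := by
        rw [← Finset.sum_compl_add_sum (Nact y) y]
        have : ∑ i ∈ Nact y, y i = 0 := by
          apply Finset.sum_eq_zero
          intro i hi
          simpa [Nact] using hi
        rw [this, add_zero]
      rw [h0]
      calc ∑ i ∈ (Nact y)ᶜ, y i ≤ ∑ _i ∈ (Nact y)ᶜ, (1 + D.ε) :=
            Finset.sum_le_sum (fun i _ => (hy i).2)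
        _ = ((Nact y)ᶜ.card : ℝ) * (1 + D.ε) := by
            rw [Finset.sum_const, nsmul_eq_mul]
        _ = ((n:ℝ) - (Nact y).card) * (1 + D.ε) := by
            rw [Finset.card_compl]
            simp [Nat.cast_sub hNn]
    have hNs1 : (D.s : ℝ) + 1 ≤ ((Nact y).card : ℝ) := by exact_mod_cast hcon
    have hεpos := D.hεpos
    nlinarith [hsum, hsum2]
  -- Part 3: |O| ≤ 1
  have key : ∀ i ∈ Oact D t x y, D.c i = M.mu3 := by
    intro i hi
    simp only [Oact, Hact, Finset.mem_compl, Finset.mem_union, not_or] at hi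
    obtain ⟨⟨hE, hN⟩, hG, hL⟩ := hi
    have h2 := congrArg (fun z : Vec n × Vec n => z.2 i) heq
    simp only [KKTEq] at heq
    have h2 := congrArg (fun z : Vec n × Vec n => z.2 i) heq
    simp only [Prod.snd_add, Prod.snd_sub, Prod.smul_snd, Prod.snd_sum, ey, eAll, hvec,
      Pi.add_apply, Pi.sub_apply, Finset.sum_apply, Pi.smul_apply, Pi.single_apply,
      smul_eq_mul, mul_ite, mul_one, mul_zero, Finset.sum_ite_eq, smul_zero,
      Pi.zero_apply, Finset.sum_const_zero, if_neg hE, if_neg hN, if_neg hG, if_neg hL] at h2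
    linarith [h2]
  have hOcard : (Oact D t x y).card ≤ 1 := by
    apply Finset.card_le_one.mpr
    intro a ha b hb
    exact D.hcinj ((key a ha).trans (key b hb).symm)
  refine ⟨?_, hNcard, hOcard⟩
  -- Part 1
  have hcover : (Finset.univ : Finset (Fin n)) = (Eact D y ∪ Nact y ∪ Hact t x y) ∪ Oact D t x y := by
    rw [Oact]; exact (Finset.union_compl _).symm
  have : n ≤ (Eact D y ∪ Hact t x y).card + (Nact y).card + (Oact D t x y).card := by
    calc n = (Finset.univ : Finset (Fin n)).card := by simp
      _ = ((Eact D y ∪ Nact y ∪ Hact t x y) ∪ Oact D t x y).card := by rw [← hcover]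
      _ ≤ (Eact D y ∪ Nact y ∪ Hact t x y).card + (Oact D t x y).card :=
          Finset.card_union_le _ _
      _ ≤ (Eact D y ∪ Hact t x y).card + (Nact y).card + (Oact D t x y).card := by
          have : (Eact D y ∪ Nact y ∪ Hact t x y) ⊆ (Eact D y ∪ Hact t x y) ∪ Nact y := by
            intro i hi
            simp only [Finset.mem_union] at hi ⊢
            tauto
          have := (Finset.card_le_card this).trans (Finset.card_union_le _ _)
          omega
  omega

end Scholtes
end
end
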